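/- arXiv:cs/0608101 — 4 statements merged into one kernel-verified Lean document; each statement's English description precedes it below -/
import Mathlib

section
/- Let H = (V,U;A) be a semicomplete bipartite digraph that contains no induced subdigraph belonging to the family HFORB and no induced directed 4-cycle, and suppose that for every pair v, v' ∈ V we have N^+(v) ⊆ N^+(v') or N^+(v') ⊆ N^+(v). Call v, v' ∈ V similar if N^+(v) = N^+(v'), let V_1,…,V_s be the similarity classes of V, indexed so that N^+(V_1) ⊊ N^+(V_2) ⊊ … ⊊ N^+(V_s), and set U_1 = N^+(V_1) and U_i = N^+(V_i) \ (U_1 ∪ … ∪ U_{i−1}) for i > 1. Then whenever u ∈ U_i, v ∈ V_j, j > i and uv ∈ A(H), one has: u' v ∈ A(H) for every u' ∈ U_r with r > i, and u v' ∈ A(H) for every v' ∈ V_t with t < j. -/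
namespace SBD

/-- `F` has an induced copy in the digraph with arc relation `A`. -/
def InducedCopy {β W : Type*} (F : β → β → Prop) (A : W → W → Prop) : Prop :=
  ∃ f : β → W, Function.Injective f ∧ ∀ a b, F a b ↔ A (f a) (f b)

/-- The undirected graph `E` is isomorphic to the underlying graph of the subdigraph of
`R` induced by the image of some injection. -/
def GraphCopy {β W : Type*} (E : β → β → Prop) (R : W → W → Prop) : Prop :=
  ∃ f : β → W, Function.Injective f ∧ ∀ a b, E a b ↔ (R (f a) (f b) ∨ R (f b) (f a))

/-- C4' : vertices x1=0, x2=1, y1=2, y2=3, arcs {x1y1, y1x2, x2y2, y2x1, y1x1}. -/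
def C4P : Fin 4 → Fin 4 → Prop := fun a b =>
  (a, b) ∈ ([(0,2),(2,1),(1,3),(3,0),(2,0)] : List (Fin 4 × Fin 4))

/-- C4'' : C4' plus the arc x2y1. -/
def C4PP : Fin 4 → Fin 4 → Prop := fun a b =>
  (a, b) ∈ ([(0,2),(2,1),(1,3),(3,0),(2,0),(1,2)] : List (Fin 4 × Fin 4))

/-- H* : vertices x1=0, x2=1, y1=2, y2=3, y3=4, arcs {x1y1,y1x2,x2y2,y2x1,x1y3,x2y3}. -/
def Hstar : Fin 5 → Fin 5 → Prop := fun a b =>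
  (a, b) ∈ ([(0,2),(2,1),(1,3),(3,0),(0,4),(1,4)] : List (Fin 5 × Fin 5))

/-- N1 : vertices x1=0,x2=1,x3=2,y1=3,y2=4,y3=5. -/
def N1 : Fin 6 → Fin 6 → Prop := fun a b =>
  (a, b) ∈ ([(0,3),(3,0),(1,4),(4,1),(2,5),(5,2),(3,1),(3,2),(0,4),(0,5),(2,4),(1,5)] :
    List (Fin 6 × Fin 6))

/-- N2 : N1 with the arc y1x1 removed. -/
def N2 : Fin 6 → Fin 6 → Prop := fun a b =>
  (a, b) ∈ ([(0,3),(1,4),(4,1),(2,5),(5,2),(3,1),(3,2),(0,4),(0,5),(2,4),(1,5)] :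
    List (Fin 6 × Fin 6))

/-- symmetric (undirected) edge relation generated by a list of pairs -/
def symE {n : ℕ} (l : List (Fin n × Fin n)) : Fin n → Fin n → Prop :=
  fun a b => (a, b) ∈ l ∨ (b, a) ∈ l

/-- bipartite claw: x1=0,x2=1,x3=2,x4=3,y1=4,y2=5,y3=6. -/
def clawE : Fin 7 → Fin 7 → Prop := symE [(3,4),(4,0),(3,5),(5,1),(3,6),(6,2)]

/-- bipartite net -/
def netE : Fin 7 → Fin 7 → Prop := symE [(0,4),(4,2),(4,3),(2,5),(3,5),(5,1),(6,3)]

/-- bipartite tent -/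
def tentE : Fin 7 → Fin 7 → Prop := symE [(4,0),(4,1),(4,2),(4,3),(0,5),(0,6),(3,5),(1,6)]

/-- undirected cycle on `n` vertices -/
def cycE (n : ℕ) : ZMod n → ZMod n → Prop := fun a b => b = a + 1 ∨ a = b + 1

/-- directed cycle on `n` vertices -/
def dirCyc (n : ℕ) : ZMod n → ZMod n → Prop := fun a b => b = a + 1

/-- arcs of H^→ : from the V-side (σ = false) to the U-side (σ = true) -/
def fwdArc {W : Type*} (σ : W → Bool) (A : W → W → Prop) : W → W → Prop :=
  fun x y => A x y ∧ σ x = false ∧ σ y = true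

/-- arcs of H^← : from the U-side (σ = true) to the V-side (σ = false) -/
def bwdArc {W : Type*} (σ : W → Bool) (A : W → W → Prop) : W → W → Prop :=
  fun x y => A x y ∧ σ x = true ∧ σ y = false

/-- arcs of H^↔ : arcs lying on 2-cycles -/
def symArc {W : Type*} (A : W → W → Prop) : W → W → Prop :=
  fun x y => A x y ∧ A y x

/-- underlying undirected graph of H^→ -/
def unFwd {W : Type*} (σ : W → Bool) (A : W → W → Prop) : W → W → Prop :=
  fun x y => fwdArc σ A x y ∨ fwdArc σ A y x

/-- The bipartite digraph `(σ, A)` contains an induced subdigraph from the family HFORB. -/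
def ContainsHFORB {W : Type*} (σ : W → Bool) (A : W → W → Prop) : Prop :=
  InducedCopy C4P A ∨ InducedCopy (flip C4P) A ∨
  InducedCopy C4PP A ∨ InducedCopy (flip C4PP) A ∨
  InducedCopy Hstar A ∨ InducedCopy (flip Hstar) A ∨
  InducedCopy N1 A ∨ InducedCopy (flip N1) A ∨
  InducedCopy N2 A ∨ InducedCopy (flip N2) A ∨
  (∃ R ∈ [fwdArc σ A, bwdArc σ A, symArc A],
    GraphCopy clawE R ∨ GraphCopy netE R ∨ GraphCopy tentE R ∨
    ∃ k : ℕ, 3 ≤ k ∧ GraphCopy (cycE (2 * k)) R)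

/-- `(σ, A)` is a semicomplete bipartite digraph with partite sets `σ = false` (the set V)
and `σ = true` (the set U). -/
def SemicompleteBipartite {W : Type*} (σ : W → Bool) (A : W → W → Prop) : Prop :=
  (∀ x y, A x y → σ x ≠ σ y) ∧ (∀ x y, σ x ≠ σ y → A x y ∨ A y x)

/-- the concatenated ordering of the classes `V_j` and `V_{j+1}`. -/
def concatOrd {W : Type*} {k : ℕ} {part : W → ZMod k} {len : ZMod k → ℕ}
    (ord : (j : ZMod k) → Fin (len j) ≃ {x : W // part x = j}) (j : ZMod k) :
    Fin (len j + len (j + 1)) → W :=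
  Fin.addCases (fun i => ((ord j) i).1) (fun i => ((ord (j + 1)) i).1)

/-- `A` has a `k`-Min-Max ordering. -/
def HasKMinMaxOrdering {W : Type*} (A : W → W → Prop) (k : ℕ) : Prop :=
  ∃ (part : W → ZMod k) (len : ZMod k → ℕ)
    (ord : (j : ZMod k) → Fin (len j) ≃ {x : W // part x = j}),
    (∀ x y, A x y → part y = part x + 1) ∧
    ∀ (j : ZMod k) (i₁ i₂ i₃ i₄ : Fin (len j + len (j + 1))),
      A (concatOrd ord j i₁) (concatOrd ord j i₂) →
      A (concatOrd ord j i₃) (concatOrd ord j i₄) →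
      A (concatOrd ord j (min i₁ i₃)) (concatOrd ord j (min i₂ i₄)) ∧
      A (concatOrd ord j (max i₁ i₃)) (concatOrd ord j (max i₂ i₄))

lemma c4p_copy {W : Type*} {A : W → W → Prop} {x1 x2 y1 y2 : W}
    (irr : ∀ x, ¬ A x x)
    (h1 : A x1 y1) (h2 : A y1 x2) (h3 : A x2 y2) (h4 : A y2 x1) (h5 : A y1 x1)
    (n1 : ¬A x1 x2) (n2 : ¬A x2 x1) (n3 : ¬A y1 y2) (n4 : ¬A y2 y1)
    (n5 : ¬A x1 y2) (n6 : ¬A x2 y1) (n7 : ¬A y2 x2)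
    (d1 : x1 ≠ x2) (d2 : y1 ≠ y2) (d3 : x1 ≠ y1) (d4 : x1 ≠ y2)
    (d5 : x2 ≠ y1) (d6 : x2 ≠ y2) :
    InducedCopy C4P A := by
  refine ⟨![x1, x2, y1, y2], ?_, ?_⟩
  · intro a b hab
    fin_cases a <;> fin_cases b <;> simp_all
  · intro a b
    fin_cases a <;> fin_cases b <;>
      simp [C4P, Prod.ext_iff] <;> first | exact irr _ | assumption

lemma c4pp_copy {W : Type*} {A : W → W → Prop} {x1 x2 y1 y2 : W}
    (irr : ∀ x, ¬ A x x)
    (h1 : A x1 y1) (h2 : A y1 x2) (h3 : A x2 y2) (h4 : A y2 x1) (h5 : A y1 x1)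
    (h6 : A x2 y1)
    (n1 : ¬A x1 x2) (n2 : ¬A x2 x1) (n3 : ¬A y1 y2) (n4 : ¬A y2 y1)
    (n5 : ¬A x1 y2) (n6 : ¬A y2 x2)
    (d1 : x1 ≠ x2) (d2 : y1 ≠ y2) (d3 : x1 ≠ y1) (d4 : x1 ≠ y2)
    (d5 : x2 ≠ y1) (d6 : x2 ≠ y2) :
    InducedCopy C4PP A := by
  refine ⟨![x1, x2, y1, y2], ?_, ?_⟩
  · intro a b hab
    fin_cases a <;> fin_cases b <;> simp_all
  · intro a b
    fin_cases a <;> fin_cases b <;>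
      simp [C4PP, Prod.ext_iff] <;> first | exact irr _ | assumption
/-- Claim (1) inside Lemma 3.1: with `V₁, …, V_s` the similarity classes of the V-side,
indexed so that `N⁺(V₁) ⊊ … ⊊ N⁺(V_s)`, and `U_i = N⁺(V_i) \ (U_1 ∪ ⋯ ∪ U_{i-1})`:
if `u ∈ U_i`, `v ∈ V_j`, `i < j` and `uv ∈ A`, then every `u' ∈ U_r` with `r > i`
dominates `v`, and `u` dominates every `v' ∈ V_t` with `t < j`. -/
theorem stmt5 {W : Type*} [Fintype W] (σ : W → Bool) (A : W → W → Prop)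
    (hsb : SemicompleteBipartite σ A)
    (hforb : ¬ ContainsHFORB σ A)
    (hc4 : ¬ InducedCopy (dirCyc 4) A)
    (hnest : ∀ v v' : W, σ v = false → σ v' = false →
      {y | A v y} ⊆ {y | A v' y} ∨ {y | A v' y} ⊆ {y | A v y})
    (s : ℕ) (Vc : Fin s → Set W)
    (hVside : ∀ i, Vc i ⊆ {x | σ x = false})
    (hVne : ∀ i, (Vc i).Nonempty)
    (hVcover : ∀ x, σ x = false → ∃ i, x ∈ Vc i)
    (hVsim : ∀ i, ∀ v ∈ Vc i, ∀ v' ∈ Vc i, {y | A v y} = {y | A v' y})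
    (hVmono : ∀ i i' : Fin s, i < i' → ∀ v ∈ Vc i, ∀ v' ∈ Vc i',
      {y | A v y} ⊂ {y | A v' y})
    (Uc : Fin s → Set W)
    (hU : ∀ i : Fin s,
      Uc i = {y | ∃ v ∈ Vc i, A v y} \ ⋃ (r : Fin s) (_ : r < i), Uc r) :
    ∀ i j : Fin s, i < j → ∀ u ∈ Uc i, ∀ v ∈ Vc j, A u v →
      (∀ r : Fin s, i < r → ∀ u' ∈ Uc r, A u' v) ∧
      (∀ t : Fin s, t < j → ∀ v' ∈ Vc t, A u v') := by
  have irr : ∀ x, ¬ A x x := fun x h => hsb.1 x x h rfl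
  have nsame : ∀ x y : W, σ x = σ y → ¬ A x y := fun x y h hA => hsb.1 x y hA h
  have neσ : ∀ x y : W, σ x ≠ σ y → x ≠ y := fun x y h hxy => h (by rw [hxy])
  have sideU : ∀ x y : W, σ x = false → A x y → σ y = true := by
    intro x y hx hA
    have h := hsb.1 x y hA
    rw [hx] at h
    cases hb : σ y
    · exact absurd hb.symm h
    · rfl
  have pick : ∀ x y : W, σ x ≠ σ y → ¬ A y x → A x y := by
    intro x y hxy hn
    rcases hsb.2 x y hxy with h | h
    exacts [h, absurd h hn]
  have hUsub : ∀ i : Fin s, ∀ u ∈ Uc i, ∃ v ∈ Vc i, A v u := by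
    intro i u hu; rw [hU i] at hu; exact hu.1
  have hUdisj : ∀ i r : Fin s, r < i → ∀ u ∈ Uc i, u ∉ Uc r := by
    intro i r hri u hu hur
    rw [hU i] at hu
    exact hu.2 (Set.mem_iUnion.2 ⟨r, Set.mem_iUnion.2 ⟨hri, hur⟩⟩)
  have hcover : ∀ j : Fin s, ∀ u, (∃ v ∈ Vc j, A v u) → ∃ q : Fin s, q ≤ j ∧ u ∈ Uc q := by
    intro j u hu
    by_cases h : u ∈ ⋃ (r : Fin s) (_ : r < j), Uc r
    · obtain ⟨r, hr⟩ := Set.mem_iUnion.1 h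
      obtain ⟨hrj, hur⟩ := Set.mem_iUnion.1 hr
      exact ⟨r, le_of_lt hrj, hur⟩
    · exact ⟨j, le_refl j, by rw [hU j]; exact ⟨hu, h⟩⟩
  have hmono : ∀ (a b : Fin s), a ≤ b → ∀ w ∈ Vc a, ∀ v ∈ Vc b, ∀ y, A w y → A v y := by
    intro a b hab w hw v hv y hy
    rcases lt_or_eq_of_le hab with h | h
    · exact (hVmono a b h w hw v hv).subset hy
    · subst h
      have h2 := hVsim a w hw v hv
      exact (Set.ext_iff.1 h2 y).1 hy
  have hnohit : ∀ (r j : Fin s), j < r → ∀ u ∈ Uc r, ∀ v ∈ Vc j, ¬ A v u := by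
    intro r j hjr u hu v hv hA
    obtain ⟨q, hqj, huq⟩ := hcover j u ⟨v, hv, hA⟩
    exact hUdisj r q (lt_of_le_of_lt hqj hjr) u hu huq
  intro i j hij u hu v hv hAuv
  obtain ⟨w, hw, hwAu⟩ := hUsub i u hu
  have hσw : σ w = false := hVside i hw
  have hσv : σ v = false := hVside j hv
  have hσu : σ u = true := sideU w u hσw hwAu
  have hAvu : A v u := hmono i j (le_of_lt hij) w hw v hv u hwAu
  constructor
  · intro r hir u' hu'
    obtain ⟨x, hx, hxAu'⟩ := hUsub r u' hu'
    have hσu' : σ u' = true := sideU x u' (hVside r hx) hxAu'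
    by_cases hrj : r ≤ j
    · have hAvu' : A v u' := hmono r j hrj x hx v hv u' hxAu'
      by_contra hn
      have hnwu' : ¬ A w u' := hnohit r i hir u' hu' w hw
      have hAu'w : A u' w := pick u' w (by rw [hσu', hσw]; simp) hnwu'
      have dne1 : u ≠ u' := fun h => hnwu' (h ▸ hwAu)
      have dne2 : v ≠ w := fun h => hnwu' (h ▸ hAvu')
      by_cases hc : A u w
      · -- C4PP with x1=w, x2=v, y1=u, y2=u'
        exact hforb ((fun h => Or.inr (Or.inr (Or.inl h))) (c4pp_copy irr hwAu hAuv hAvu' hAu'w hc hAvu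
          (nsame w v (by rw [hσw, hσv])) (nsame v w (by rw [hσw, hσv]))
          (nsame u u' (by rw [hσu, hσu'])) (nsame u' u (by rw [hσu, hσu']))
          hnwu' hn
          dne2.symm dne1 (neσ w u (by rw [hσw, hσu]; simp))
          (neσ w u' (by rw [hσw, hσu']; simp)) (neσ v u (by rw [hσv, hσu]; simp))
          (neσ v u' (by rw [hσv, hσu']; simp))))
      · -- C4P with x1=u, x2=u', y1=v, y2=w
        exact hforb (Or.inl (c4p_copy irr hAuv hAvu' hAu'w hwAu hAvu
          (nsame u u' (by rw [hσu, hσu'])) (nsame u' u (by rw [hσu, hσu']))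
          (nsame v w (by rw [hσv, hσw])) (nsame w v (by rw [hσv, hσw]))
          hc hn hnwu'
          dne1 dne2 (neσ u v (by rw [hσu, hσv]; simp))
          (neσ u w (by rw [hσu, hσw]; simp)) (neσ u' v (by rw [hσu', hσv]; simp))
          (neσ u' w (by rw [hσu', hσw]; simp))))
    · push_neg at hrj
      exact pick u' v (by rw [hσu', hσv]; simp) (hnohit r j hrj u' hu' v hv)
  · intro t htj v' hv'
    have hσv' : σ v' = false := hVside t hv'
    by_cases hti : i ≤ t
    · by_contra hn
      have hAv'u : A v' u := hmono i t hti w hw v' hv' u hwAu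
      obtain ⟨u₀, hvu₀, hnv'u₀⟩ := Set.exists_of_ssubset (hVmono t j htj v' hv' v hv)
      have hvu₀ : A v u₀ := hvu₀
      have hnv'u₀ : ¬ A v' u₀ := hnv'u₀
      have hσu₀ : σ u₀ = true := sideU v u₀ hσv hvu₀
      have hAu₀v' : A u₀ v' := pick u₀ v' (by rw [hσu₀, hσv']; simp) hnv'u₀
      have dne1 : u ≠ u₀ := fun h => hn (h ▸ hAu₀v')
      have dne2 : v ≠ v' := fun h => hnv'u₀ (h ▸ hvu₀)
      by_cases hc : A u₀ v
      · -- C4PP with x1=u, x2=u₀, y1=v, y2=v'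
        exact hforb ((fun h => Or.inr (Or.inr (Or.inl h))) (c4pp_copy irr hAuv hvu₀ hAu₀v' hAv'u hAvu hc
          (nsame u u₀ (by rw [hσu, hσu₀])) (nsame u₀ u (by rw [hσu, hσu₀]))
          (nsame v v' (by rw [hσv, hσv'])) (nsame v' v (by rw [hσv, hσv']))
          hn hnv'u₀
          dne1 dne2 (neσ u v (by rw [hσu, hσv]; simp))
          (neσ u v' (by rw [hσu, hσv']; simp)) (neσ u₀ v (by rw [hσu₀, hσv]; simp))
          (neσ u₀ v' (by rw [hσu₀, hσv']; simp))))
      · -- C4P with x1=u, x2=u₀, y1=v, y2=v'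
        exact hforb (Or.inl (c4p_copy irr hAuv hvu₀ hAu₀v' hAv'u hAvu
          (nsame u u₀ (by rw [hσu, hσu₀])) (nsame u₀ u (by rw [hσu, hσu₀]))
          (nsame v v' (by rw [hσv, hσv'])) (nsame v' v (by rw [hσv, hσv']))
          hn hc hnv'u₀
          dne1 dne2 (neσ u v (by rw [hσu, hσv]; simp))
          (neσ u v' (by rw [hσu, hσv']; simp)) (neσ u₀ v (by rw [hσu₀, hσv]; simp))
          (neσ u₀ v' (by rw [hσu₀, hσv']; simp))))
    · push_neg at hti
      exact pick u v' (by rw [hσu, hσv']; simp) (hnohit i t hti u hu v' hv')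

end SBD
end

section
/- Let H = (V,U;A) be a strongly connected semicomplete bipartite digraph that contains no induced subdigraph belonging to the family HFORB and no induced directed 4-cycle. If UN(H^→) is connected and has diameter at least 4, then UN(H^←) is a complete bipartite graph, i.e., uv ∈ A(H) for every u ∈ U and v ∈ V. -/
namespace SBD

section AuxProof

variable {W : Type*}

private lemma aux_mkC4 (B : W → W → Prop) (w0 w1 w2 w3 : W)
    (d1 : w0 ≠ w2) (d2 : w1 ≠ w3)
    (m1 : ¬B w0 w0) (m2 : ¬B w0 w2) (m3 : ¬B w2 w0) (m4 : ¬B w2 w2)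
    (m5 : ¬B w1 w1) (m6 : ¬B w1 w3) (m7 : ¬B w3 w1) (m8 : ¬B w3 w3)
    (p1 : B w0 w1) (p2 : B w1 w2) (p3 : B w2 w3) (p4 : B w3 w0)
    (q1 : ¬B w1 w0) (q2 : ¬B w2 w1) (q3 : ¬B w3 w2) (q4 : ¬B w0 w3) :
    InducedCopy (dirCyc 4) B := by
  have e01 : w0 ≠ w1 := fun h => m5 (h ▸ p1)
  have e03 : w0 ≠ w3 := fun h => m8 (h ▸ p4)
  have e12 : w1 ≠ w2 := fun h => m4 (h ▸ p2)
  have e23 : w2 ≠ w3 := fun h => m8 (h ▸ p3)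
  refine ⟨fun i : ZMod 4 => [w0, w1, w2, w3].get i, ?_, ?_⟩
  · intro a b hab
    by_contra hne
    have hmem : (a, b) ∈ ([(0,1),(0,2),(0,3),(1,0),(1,2),(1,3),(2,0),(2,1),(2,3),(3,0),(3,1),(3,2)] :
        List (ZMod 4 × ZMod 4)) := by
      have h2 : ∀ p : ZMod 4 × ZMod 4, ¬ p.1 = p.2 →
          p ∈ ([(0,1),(0,2),(0,3),(1,0),(1,2),(1,3),(2,0),(2,1),(2,3),(3,0),(3,1),(3,2)] :
          List (ZMod 4 × ZMod 4)) := by decide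
      exact h2 (a, b) hne
    simp only [List.mem_cons, List.not_mem_nil, or_false, Prod.mk.injEq] at hmem
    rcases hmem with ⟨rfl,rfl⟩|⟨rfl,rfl⟩|⟨rfl,rfl⟩|⟨rfl,rfl⟩|⟨rfl,rfl⟩|⟨rfl,rfl⟩|⟨rfl,rfl⟩|⟨rfl,rfl⟩|⟨rfl,rfl⟩|⟨rfl,rfl⟩|⟨rfl,rfl⟩|⟨rfl,rfl⟩ <;>
      first
        | exact absurd hab (by assumption)
        | exact absurd hab.symm (by assumption)
  · intro a b
    have spec : ∀ a b : ZMod 4, (b = a + 1) ↔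
        ((a, b) ∈ ([(0,1),(1,2),(2,3),(3,0)] : List (ZMod 4 × ZMod 4))) := by decide
    simp only [dirCyc]
    rw [spec a b]
    constructor
    · intro hm
      simp only [List.mem_cons, List.not_mem_nil, or_false, Prod.mk.injEq] at hm
      rcases hm with ⟨rfl,rfl⟩|⟨rfl,rfl⟩|⟨rfl,rfl⟩|⟨rfl,rfl⟩ <;> assumption
    · intro hB
      by_contra hm
      have hmem : (a, b) ∈ ([(0,0),(0,2),(0,3),(1,0),(1,1),(1,3),(2,0),(2,1),(2,2),(3,1),(3,2),(3,3)] :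
          List (ZMod 4 × ZMod 4)) := by
        have h2 : ∀ p : ZMod 4 × ZMod 4, p ∉ ([(0,1),(1,2),(2,3),(3,0)] : List (ZMod 4 × ZMod 4)) →
            p ∈ ([(0,0),(0,2),(0,3),(1,0),(1,1),(1,3),(2,0),(2,1),(2,2),(3,1),(3,2),(3,3)] :
            List (ZMod 4 × ZMod 4)) := by decide
        exact h2 (a, b) hm
      simp only [List.mem_cons, List.not_mem_nil, or_false, Prod.mk.injEq] at hmem
      rcases hmem with ⟨rfl,rfl⟩|⟨rfl,rfl⟩|⟨rfl,rfl⟩|⟨rfl,rfl⟩|⟨rfl,rfl⟩|⟨rfl,rfl⟩|⟨rfl,rfl⟩|⟨rfl,rfl⟩|⟨rfl,rfl⟩|⟨rfl,rfl⟩|⟨rfl,rfl⟩|⟨rfl,rfl⟩ <;>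
        exact absurd hB (by assumption)

private lemma aux_mkC4P (B : W → W → Prop) (x1 y1 x2 y2 : W)
    (nx : x1 ≠ x2) (ny : y1 ≠ y2)
    (s1 : ¬ B x1 x1) (s2 : ¬ B x1 x2) (s3 : ¬ B x2 x1) (s4 : ¬ B x2 x2)
    (s5 : ¬ B y1 y1) (s6 : ¬ B y1 y2) (s7 : ¬ B y2 y1) (s8 : ¬ B y2 y2)
    (p1 : B x1 y1) (p2 : B y1 x2) (p3 : B x2 y2) (p4 : B y2 x1) (p5 : B y1 x1)
    (q1 : ¬ B x1 y2) (q2 : ¬ B x2 y1) (q3 : ¬ B y2 x2) :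
    InducedCopy C4P B := by
  have e11 : x1 ≠ y1 := fun h => s5 (h ▸ p1)
  have e12 : x1 ≠ y2 := fun h => s8 (h ▸ p4)
  have e21 : x2 ≠ y1 := fun h => s5 (h ▸ p2)
  have e22 : x2 ≠ y2 := fun h => s8 (h ▸ p3)
  refine ⟨fun i => [x1, x2, y1, y2].get i, ?_, ?_⟩
  · intro a b h
    fin_cases a <;> fin_cases b <;>
      first
        | rfl
        | exact absurd h (by assumption)
        | exact absurd h.symm (by assumption)
  · intro a b
    simp only [C4P]
    fin_cases a <;> fin_cases b <;>
      first
        | exact iff_of_true (by decide) (by assumption)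
        | exact iff_of_false (by decide) (by assumption)

private lemma aux_mkC4PP (B : W → W → Prop) (x1 y1 x2 y2 : W)
    (nx : x1 ≠ x2) (ny : y1 ≠ y2)
    (s1 : ¬ B x1 x1) (s2 : ¬ B x1 x2) (s3 : ¬ B x2 x1) (s4 : ¬ B x2 x2)
    (s5 : ¬ B y1 y1) (s6 : ¬ B y1 y2) (s7 : ¬ B y2 y1) (s8 : ¬ B y2 y2)
    (p1 : B x1 y1) (p2 : B y1 x2) (p3 : B x2 y2) (p4 : B y2 x1) (p5 : B y1 x1) (p6 : B x2 y1)
    (q1 : ¬ B x1 y2) (q2 : ¬ B y2 x2) :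
    InducedCopy C4PP B := by
  have e11 : x1 ≠ y1 := fun h => s5 (h ▸ p1)
  have e12 : x1 ≠ y2 := fun h => s8 (h ▸ p4)
  have e21 : x2 ≠ y1 := fun h => s5 (h ▸ p2)
  have e22 : x2 ≠ y2 := fun h => s8 (h ▸ p3)
  refine ⟨fun i => [x1, x2, y1, y2].get i, ?_, ?_⟩
  · intro a b h
    fin_cases a <;> fin_cases b <;>
      first
        | rfl
        | exact absurd h (by assumption)
        | exact absurd h.symm (by assumption)
  · intro a b
    simp only [C4PP]
    fin_cases a <;> fin_cases b <;>
      first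
        | exact iff_of_true (by decide) (by assumption)
        | exact iff_of_false (by decide) (by assumption)

private lemma aux_mkN1 (B : W → W → Prop) (x1 x2 x3 y1 y2 y3 : W)
    (d1 : x1 ≠ x2) (d2 : x1 ≠ x3) (d3 : x2 ≠ x3)
    (d4 : y1 ≠ y2) (d5 : y1 ≠ y3) (d6 : y2 ≠ y3)
    (m1 : ¬B x1 x1) (m2 : ¬B x1 x2) (m3 : ¬B x1 x3) (m4 : ¬B x2 x1) (m5 : ¬B x2 x2)
    (m6 : ¬B x2 x3) (m7 : ¬B x3 x1) (m8 : ¬B x3 x2) (m9 : ¬B x3 x3)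
    (w1 : ¬B y1 y1) (w2 : ¬B y1 y2) (w3 : ¬B y1 y3) (w4 : ¬B y2 y1) (w5 : ¬B y2 y2)
    (w6 : ¬B y2 y3) (w7 : ¬B y3 y1) (w8 : ¬B y3 y2) (w9 : ¬B y3 y3)
    (p1 : B x1 y1) (p2 : B y1 x1) (p3 : B x2 y2) (p4 : B y2 x2) (p5 : B x3 y3) (p6 : B y3 x3)
    (p7 : B y1 x2) (p8 : B y1 x3) (p9 : B x1 y2) (p10 : B x1 y3) (p11 : B x3 y2) (p12 : B x2 y3)
    (q1 : ¬B x2 y1) (q2 : ¬B x3 y1) (q3 : ¬B y2 x1) (q4 : ¬B y3 x1) (q5 : ¬B y2 x3) (q6 : ¬B y3 x2) :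
    InducedCopy N1 B := by
  have e11 : x1 ≠ y1 := fun h => w1 (h ▸ p1)
  have e12 : x1 ≠ y2 := fun h => w5 (h ▸ p9)
  have e13 : x1 ≠ y3 := fun h => w9 (h ▸ p10)
  have e21 : x2 ≠ y1 := fun h => w1 (h ▸ p7)
  have e22 : x2 ≠ y2 := fun h => w5 (h ▸ p3)
  have e23 : x2 ≠ y3 := fun h => w9 (h ▸ p12)
  have e31 : x3 ≠ y1 := fun h => w1 (h ▸ p8)
  have e32 : x3 ≠ y2 := fun h => w5 (h ▸ p11)
  have e33 : x3 ≠ y3 := fun h => w9 (h ▸ p5)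
  refine ⟨fun i => [x1, x2, x3, y1, y2, y3].get i, ?_, ?_⟩
  · intro a b h
    fin_cases a <;> fin_cases b <;>
      first
        | rfl
        | exact absurd h (by assumption)
        | exact absurd h.symm (by assumption)
  · intro a b
    simp only [N1]
    fin_cases a <;> fin_cases b <;>
      first
        | exact iff_of_true (by decide) (by assumption)
        | exact iff_of_false (by decide) (by assumption)

private lemma aux_mkN2 (B : W → W → Prop) (x1 x2 x3 y1 y2 y3 : W)
    (d1 : x1 ≠ x2) (d2 : x1 ≠ x3) (d3 : x2 ≠ x3)
    (d4 : y1 ≠ y2) (d5 : y1 ≠ y3) (d6 : y2 ≠ y3)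
    (m1 : ¬B x1 x1) (m2 : ¬B x1 x2) (m3 : ¬B x1 x3) (m4 : ¬B x2 x1) (m5 : ¬B x2 x2)
    (m6 : ¬B x2 x3) (m7 : ¬B x3 x1) (m8 : ¬B x3 x2) (m9 : ¬B x3 x3)
    (w1 : ¬B y1 y1) (w2 : ¬B y1 y2) (w3 : ¬B y1 y3) (w4 : ¬B y2 y1) (w5 : ¬B y2 y2)
    (w6 : ¬B y2 y3) (w7 : ¬B y3 y1) (w8 : ¬B y3 y2) (w9 : ¬B y3 y3)
    (p1 : B x1 y1) (p3 : B x2 y2) (p4 : B y2 x2) (p5 : B x3 y3) (p6 : B y3 x3)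
    (p7 : B y1 x2) (p8 : B y1 x3) (p9 : B x1 y2) (p10 : B x1 y3) (p11 : B x3 y2) (p12 : B x2 y3)
    (q0 : ¬B y1 x1)
    (q1 : ¬B x2 y1) (q2 : ¬B x3 y1) (q3 : ¬B y2 x1) (q4 : ¬B y3 x1) (q5 : ¬B y2 x3) (q6 : ¬B y3 x2) :
    InducedCopy N2 B := by
  have e11 : x1 ≠ y1 := fun h => w1 (h ▸ p1)
  have e12 : x1 ≠ y2 := fun h => w5 (h ▸ p9)
  have e13 : x1 ≠ y3 := fun h => w9 (h ▸ p10)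
  have e21 : x2 ≠ y1 := fun h => w1 (h ▸ p7)
  have e22 : x2 ≠ y2 := fun h => w5 (h ▸ p3)
  have e23 : x2 ≠ y3 := fun h => w9 (h ▸ p12)
  have e31 : x3 ≠ y1 := fun h => w1 (h ▸ p8)
  have e32 : x3 ≠ y2 := fun h => w5 (h ▸ p11)
  have e33 : x3 ≠ y3 := fun h => w9 (h ▸ p5)
  refine ⟨fun i => [x1, x2, x3, y1, y2, y3].get i, ?_, ?_⟩
  · intro a b h
    fin_cases a <;> fin_cases b <;>
      first
        | rfl
        | exact absurd h (by assumption)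
        | exact absurd h.symm (by assumption)
  · intro a b
    simp only [N2]
    fin_cases a <;> fin_cases b <;>
      first
        | exact iff_of_true (by decide) (by assumption)
        | exact iff_of_false (by decide) (by assumption)

private lemma aux_flipCopy {β : Type*} (F : β → β → Prop) (B : W → W → Prop)
    (h : InducedCopy F (flip B)) : InducedCopy (flip F) B := by
  obtain ⟨f, hi, hf⟩ := h
  exact ⟨f, hi, fun a b => hf b a⟩

end AuxProof

section MainProof

variable {W : Type*} {σ : W → Bool} {A : W → W → Prop}

/-- Lemma A : every directed four-cycle carries one of the two opposite pairs of
reversed arcs. -/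
private lemma aux_lemA (hsb : SemicompleteBipartite σ A)
    (hforb : ¬ ContainsHFORB σ A) (hc4 : ¬ InducedCopy (dirCyc 4) A)
    (v1 u1 v2 u2 : W)
    (h1 : σ v1 = false) (h2 : σ u1 = true) (h3 : σ v2 = false) (h4 : σ u2 = true)
    (dv : v1 ≠ v2) (du : u1 ≠ u2)
    (c1 : A v1 u1) (c2 : A u1 v2) (c3 : A v2 u2) (c4 : A u2 v1) :
    (A u1 v1 ∧ A u2 v2) ∨ (A v2 u1 ∧ A v1 u2) := by
  classical
  have nss : ∀ p q : W, σ p = σ q → ¬ A p q := fun p q h hA => hsb.1 p q hA h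
  have hC4P : ¬ InducedCopy C4P A := fun h => hforb (Or.inl h)
  have hC4PP : ¬ InducedCopy C4PP A := fun h => hforb (Or.inr (Or.inr (Or.inl h)))
  have nv11 : ¬ A v1 v1 := nss v1 v1 rfl
  have nv22 : ¬ A v2 v2 := nss v2 v2 rfl
  have nvv12 : ¬ A v1 v2 := nss v1 v2 (h1.trans h3.symm)
  have nvv21 : ¬ A v2 v1 := nss v2 v1 (h3.trans h1.symm)
  have nu11 : ¬ A u1 u1 := nss u1 u1 rfl
  have nu22 : ¬ A u2 u2 := nss u2 u2 rfl
  have nuu12 : ¬ A u1 u2 := nss u1 u2 (h2.trans h4.symm)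
  have nuu21 : ¬ A u2 u1 := nss u2 u1 (h4.trans h2.symm)
  by_contra hcon
  rw [not_or] at hcon
  obtain ⟨hA1, hA2⟩ := hcon
  by_cases r1 : A u1 v1 <;> by_cases r2 : A v2 u1 <;> by_cases r3 : A u2 v2 <;>
    by_cases r4 : A v1 u2 <;>
    first
      | exact hA1 ⟨r1, r3⟩
      | exact hA2 ⟨r2, r4⟩
      | exact hc4 (aux_mkC4 A v1 u1 v2 u2 dv du nv11 nvv12 nvv21 nv22 nu11 nuu12 nuu21 nu22
          c1 c2 c3 c4 r1 r2 r3 r4)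
      | exact hC4P (aux_mkC4P A v1 u1 v2 u2 dv du
          nv11 nvv12 nvv21 nv22 nu11 nuu12 nuu21 nu22 c1 c2 c3 c4 r1 r4 r2 r3)
      | exact hC4P (aux_mkC4P A u1 v2 u2 v1 du (Ne.symm dv)
          nu11 nuu12 nuu21 nu22 nv22 nvv21 nvv12 nv11 c2 c3 c4 c1 r2 r1 r3 r4)
      | exact hC4P (aux_mkC4P A v2 u2 v1 u1 (Ne.symm dv) (Ne.symm du)
          nv22 nvv21 nvv12 nv11 nu22 nuu21 nuu12 nu11 c3 c4 c1 c2 r3 r2 r4 r1)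
      | exact hC4P (aux_mkC4P A u2 v1 u1 v2 (Ne.symm du) dv
          nu22 nuu21 nuu12 nu11 nv11 nvv12 nvv21 nv22 c4 c1 c2 c3 r4 r3 r1 r2)
      | exact hC4PP (aux_mkC4PP A v1 u1 v2 u2 dv du
          nv11 nvv12 nvv21 nv22 nu11 nuu12 nuu21 nu22 c1 c2 c3 c4 r1 r2 r4 r3)
      | exact hC4PP (aux_mkC4PP A u1 v2 u2 v1 du (Ne.symm dv)
          nu11 nuu12 nuu21 nu22 nv22 nvv21 nvv12 nv11 c2 c3 c4 c1 r2 r3 r1 r4)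
      | exact hC4PP (aux_mkC4PP A v2 u2 v1 u1 (Ne.symm dv) (Ne.symm du)
          nv22 nvv21 nvv12 nv11 nu22 nuu21 nuu12 nu11 c3 c4 c1 c2 r3 r4 r2 r1)
      | exact hC4PP (aux_mkC4PP A u2 v1 u1 v2 (Ne.symm du) dv
          nu22 nuu21 nuu12 nu11 nv11 nvv12 nvv21 nv22 c4 c1 c2 c3 r4 r1 r3 r2)

/-- decompose an edge of `UN(H^→)` knowing the left endpoint is in V -/
private lemma aux_adjV {p q : W} (hp : σ p = false) (h : unFwd σ A p q) :
    A p q ∧ σ q = true := by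
  rcases h with ⟨ha, hb, hc⟩ | ⟨ha, hb, hc⟩
  · exact ⟨ha, hc⟩
  · rw [hp] at hc; exact absurd hc (by simp)

/-- decompose an edge of `UN(H^→)` knowing the left endpoint is in U -/
private lemma aux_adjU {p q : W} (hp : σ p = true) (h : unFwd σ A p q) :
    A q p ∧ σ q = false := by
  rcases h with ⟨ha, hb, hc⟩ | ⟨ha, hb, hc⟩
  · rw [hp] at hb; exact absurd hb (by simp)
  · exact ⟨ha, hb⟩

private lemma aux_adjI1 {p q : W} (hp : σ p = false) (hq : σ q = true) (hA : A p q) :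
    unFwd σ A p q := Or.inl ⟨hA, hp, hq⟩

private lemma aux_adjI2 {p q : W} (hp : σ p = true) (hq : σ q = false) (hA : A q p) :
    unFwd σ A p q := Or.inr ⟨hA, hq, hp⟩

private lemma aux_comm {p q : W} (h : unFwd σ A p q) : unFwd σ A q p := h.symm

/-- if `z` in V is not adjacent to `u` and has no 2-path to `v` then contradiction
(Claim 1, V-side). -/
private lemma aux_claim1V (hsb : SemicompleteBipartite σ A)
    (hforb : ¬ ContainsHFORB σ A) (hc4 : ¬ InducedCopy (dirCyc 4) A)
    (v u : W) (hv : σ v = false) (hu : σ u = true)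
    (hAvu : A v u) (hAuv : ¬ A u v) (z n : W) (hz : σ z = false) (hzv : z ≠ v)
    (hn : unFwd σ A z n) (h1 : ¬ unFwd σ A z u)
    (h2 : ¬ ∃ a, unFwd σ A z a ∧ unFwd σ A a v) : False := by
  have hOpp : ∀ p q : W, σ p ≠ σ q → ¬ A q p → A p q :=
    fun p q h h2 => (hsb.2 p q h).resolve_right h2
  obtain ⟨hAzn, hsn⟩ := aux_adjV hz hn
  have hnzu : ¬ A z u := fun h => h1 (aux_adjI1 hz hu h)
  have hAuz : A u z := hOpp u z (by rw [hu, hz]; simp) hnzu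
  have hnnv : ¬ unFwd σ A n v := fun h => h2 ⟨n, hn, h⟩
  have hnvn : ¬ A v n := fun h => hnnv (aux_adjI2 hsn hv h)
  have hAnv : A n v := hOpp n v (by rw [hsn, hv]; simp) hnvn
  have hun : u ≠ n := fun h => hnzu (by rw [h]; exact hAzn)
  rcases aux_lemA hsb hforb hc4 v u z n hv hu hz hsn (Ne.symm hzv) hun hAvu hAuz hAzn hAnv with
    ⟨hb, _⟩ | ⟨hb, _⟩
  · exact hAuv hb
  · exact hnzu hb

/-- Claim 1, U-side. -/
private lemma aux_claim1U (hsb : SemicompleteBipartite σ A)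
    (hforb : ¬ ContainsHFORB σ A) (hc4 : ¬ InducedCopy (dirCyc 4) A)
    (v u : W) (hv : σ v = false) (hu : σ u = true)
    (hAvu : A v u) (hAuv : ¬ A u v) (z n : W) (hz : σ z = true) (hzu : z ≠ u)
    (hn : unFwd σ A z n) (h1 : ¬ unFwd σ A z v)
    (h2 : ¬ ∃ a, unFwd σ A z a ∧ unFwd σ A a u) : False := by
  have hOpp : ∀ p q : W, σ p ≠ σ q → ¬ A q p → A p q :=
    fun p q h h2 => (hsb.2 p q h).resolve_right h2
  obtain ⟨hAnz, hsn⟩ := aux_adjU hz hn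
  have hnvz : ¬ A v z := fun h => h1 (aux_adjI2 hz hv h)
  have hAzv : A z v := hOpp z v (by rw [hu, hz] at *; rw [hz, hv]; simp) hnvz
  have hnnu : ¬ unFwd σ A n u := fun h => h2 ⟨n, hn, h⟩
  have hnnu' : ¬ A n u := fun h => hnnu (aux_adjI1 hsn hu h)
  have hAun : A u n := hOpp u n (by rw [hu, hsn]; simp) hnnu'
  have hvn : v ≠ n := fun h => hnvz (by rw [h]; exact hAnz)
  rcases aux_lemA hsb hforb hc4 v u n z hv hu hsn hz hvn (Ne.symm hzu) hAvu hAun hAnz hAzv with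
    ⟨hb, _⟩ | ⟨hb, _⟩
  · exact hAuv hb
  · exact hnnu' hb

/-- The final `N1`/`N2` configuration yields a contradiction. -/
private lemma aux_lemZ (B : W → W → Prop)
    (nssB : ∀ p q : W, σ p = σ q → ¬ B p q)
    (hN1 : ¬ InducedCopy N1 B) (hN2 : ¬ InducedCopy N2 B)
    (c s t f a e : W)
    (ec1 : σ c = σ a) (ec2 : σ c = σ e) (ef1 : σ f = σ s) (ef2 : σ f = σ t)
    (hst : s ≠ t) (hae : a ≠ e) (hca : c ≠ a) (hce : c ≠ e)
    (p1 : B a s) (p2 : B s a) (p3 : B e t) (p4 : B t e)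
    (p5 : B c s) (n5 : ¬ B s c) (p6 : B c t) (n6 : ¬ B t c)
    (p7 : B s e) (n7 : ¬ B e s) (p8 : B t a) (n8 : ¬ B a t)
    (p9 : B f c) (p10 : B f a) (n10 : ¬ B a f) (p11 : B f e) (n11 : ¬ B e f) :
    False := by
  classical
  have hfs : f ≠ s := fun h => n5 (h ▸ p9)
  have hft : f ≠ t := fun h => n6 (h ▸ p9)
  have m1 : ¬ B f f := nssB f f rfl
  have m2 : ¬ B f s := nssB f s ef1
  have m3 : ¬ B f t := nssB f t ef2
  have m4 : ¬ B s f := nssB s f ef1.symm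
  have m5 : ¬ B s s := nssB s s rfl
  have m6 : ¬ B s t := nssB s t (ef1.symm.trans ef2)
  have m7 : ¬ B t f := nssB t f ef2.symm
  have m8 : ¬ B t s := nssB t s (ef2.symm.trans ef1)
  have m9 : ¬ B t t := nssB t t rfl
  have w1 : ¬ B c c := nssB c c rfl
  have w2 : ¬ B c a := nssB c a ec1
  have w3 : ¬ B c e := nssB c e ec2
  have w4 : ¬ B a c := nssB a c ec1.symm
  have w5 : ¬ B a a := nssB a a rfl
  have w6 : ¬ B a e := nssB a e (ec1.symm.trans ec2)
  have w7 : ¬ B e c := nssB e c ec2.symm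
  have w8 : ¬ B e a := nssB e a (ec2.symm.trans ec1)
  have w9 : ¬ B e e := nssB e e rfl
  by_cases hcf : B c f
  · exact hN1 (aux_mkN1 B f s t c a e hfs hft hst hca hce hae
      m1 m2 m3 m4 m5 m6 m7 m8 m9 w1 w2 w3 w4 w5 w6 w7 w8 w9
      p9 hcf p2 p1 p4 p3 p5 p6 p10 p11 p8 p7 n5 n6 n10 n11 n8 n7)
  · exact hN2 (aux_mkN2 B f s t c a e hfs hft hst hca hce hae
      m1 m2 m3 m4 m5 m6 m7 m8 m9 w1 w2 w3 w4 w5 w6 w7 w8 w9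
      p9 p2 p1 p4 p3 p5 p6 p10 p11 p8 p7 hcf n5 n6 n10 n11 n8 n7)


private lemma aux_oppTF (hsb : SemicompleteBipartite σ A) {p q : W}
    (hp : σ p = true) (hq : σ q = false) (hn : ¬ A q p) : A p q :=
  (hsb.2 p q (by rw [hp, hq]; simp)).resolve_right hn

private lemma aux_oppFT (hsb : SemicompleteBipartite σ A) {p q : W}
    (hp : σ p = false) (hq : σ q = true) (hn : ¬ A q p) : A p q :=
  (hsb.2 p q (by rw [hp, hq]; simp)).resolve_right hn

private lemma aux_hN1A (hforb : ¬ ContainsHFORB σ A) : ¬ InducedCopy N1 A :=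
  fun h => hforb (Or.inr (Or.inr (Or.inr (Or.inr (Or.inr (Or.inr (Or.inl h)))))))

private lemma aux_hN2A (hforb : ¬ ContainsHFORB σ A) : ¬ InducedCopy N2 A :=
  fun h => hforb (Or.inr (Or.inr (Or.inr (Or.inr (Or.inr (Or.inr (Or.inr (Or.inr (Or.inl h)))))))))

private lemma aux_hN1F (hforb : ¬ ContainsHFORB σ A) : ¬ InducedCopy N1 (flip A) :=
  fun h => hforb (Or.inr (Or.inr (Or.inr (Or.inr (Or.inr (Or.inr (Or.inr (Or.inl
    (aux_flipCopy N1 A h)))))))))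

private lemma aux_hN2F (hforb : ¬ ContainsHFORB σ A) : ¬ InducedCopy N2 (flip A) :=
  fun h => hforb (Or.inr (Or.inr (Or.inr (Or.inr (Or.inr (Or.inr (Or.inr (Or.inr (Or.inr (Or.inl
    (aux_flipCopy N2 A h)))))))))))

private lemma aux_nssA (hsb : SemicompleteBipartite σ A) :
    ∀ p q : W, σ p = σ q → ¬ A p q := fun p q h hA => hsb.1 p q hA h

private lemma aux_nssF (hsb : SemicompleteBipartite σ A) :
    ∀ p q : W, σ p = σ q → ¬ (flip A) p q := fun p q h hA => hsb.1 q p hA h.symm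

/-- CRUX C : mixed sides. -/
private lemma aux_cruxC (hsb : SemicompleteBipartite σ A)
    (hforb : ¬ ContainsHFORB σ A) (hc4 : ¬ InducedCopy (dirCyc 4) A)
    (v u : W) (hv : σ v = false) (hu : σ u = true) (hAvu : A v u) (hAuv : ¬ A u v)
    (p q s t : W) (hsp : σ p = false) (hsq : σ q = true)
    (hpq3 : ¬ ∃ a b, unFwd σ A p a ∧ unFwd σ A a b ∧ unFwd σ A b q)
    (hEps : unFwd σ A p s) (hEsv : unFwd σ A s v)
    (hEqt : unFwd σ A q t) (hEtu : unFwd σ A t u)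
    (hnEpu : ¬ unFwd σ A p u) (hnEqv : ¬ unFwd σ A q v) : False := by
  obtain ⟨hAps, hss⟩ := aux_adjV hsp hEps
  obtain ⟨hAvs, _⟩ := aux_adjU hss hEsv
  obtain ⟨hAtq, hst⟩ := aux_adjU hsq hEqt
  obtain ⟨hAtu, _⟩ := aux_adjV hst hEtu
  have hnApu : ¬ A p u := fun h => hnEpu (aux_adjI1 hsp hu h)
  have hAup : A u p := aux_oppTF hsb hu hsp hnApu
  have hnAvq : ¬ A v q := fun h => hnEqv (aux_adjI2 hsq hv h)
  have hAqv : A q v := aux_oppTF hsb hsq hv hnAvq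
  have hnAts : ¬ A t s := fun h =>
    hpq3 ⟨s, t, hEps, aux_comm (aux_adjI1 hst hss h), aux_comm hEqt⟩
  have hAst : A s t := aux_oppTF hsb hss hst hnAts
  have hpv : p ≠ v := fun h => hnEpu (by rw [h]; exact aux_adjI1 hv hu hAvu)
  have hus : u ≠ s := fun h => hnEpu (by rw [h]; exact hEps)
  have hvt : v ≠ t := fun h => hnAvq (h.symm ▸ hAtq)
  have huq : u ≠ q := fun h => hAuv (h.symm ▸ hAqv)
  have hnAsv : ¬ A s v := by
    intro hx
    rcases aux_lemA hsb hforb hc4 v u p s hv hu hsp hss (Ne.symm hpv) hus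
      hAvu hAup hAps hx with ⟨hb, _⟩ | ⟨hb, _⟩
    · exact hAuv hb
    · exact hnApu hb
  have hnAut : ¬ A u t := by
    intro hx
    rcases aux_lemA hsb hforb hc4 v u t q hv hu hst hsq hvt huq
      hAvu hx hAtq hAqv with ⟨hb, _⟩ | ⟨_, hb⟩
    · exact hAuv hb
    · exact hnAvq hb
  have hsq2 : s ≠ q := fun h => hnAsv (h.symm ▸ hAqv)
  rcases aux_lemA hsb hforb hc4 v s t q hv hss hst hsq hvt hsq2
    hAvs hAst hAtq hAqv with ⟨hb, _⟩ | ⟨hb, _⟩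
  · exact hnAsv hb
  · exact hnAts hb

/-- CRUX A : both far vertices on the V side, both with 2-paths to `v`. -/
private lemma aux_cruxA (hsb : SemicompleteBipartite σ A)
    (hforb : ¬ ContainsHFORB σ A) (hc4 : ¬ InducedCopy (dirCyc 4) A)
    (v u : W) (hv : σ v = false) (hu : σ u = true) (hAvu : A v u) (hAuv : ¬ A u v)
    (f : W) (hAfv : A f v)
    (p q s t : W) (hsp : σ p = false) (hsq : σ q = false) (hpq : p ≠ q)
    (hpq2 : ¬ ∃ a, unFwd σ A p a ∧ unFwd σ A a q)
    (hEps : unFwd σ A p s) (hEsv : unFwd σ A s v)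
    (hEqt : unFwd σ A q t) (hEtv : unFwd σ A t v)
    (hnEpu : ¬ unFwd σ A p u) (hnEqu : ¬ unFwd σ A q u) : False := by
  have hsf : σ f = true := by
    cases hx : σ f
    · exact absurd (hx.trans hv.symm) (hsb.1 f v hAfv)
    · rfl
  obtain ⟨hAps, hss⟩ := aux_adjV hsp hEps
  obtain ⟨hAvs, _⟩ := aux_adjU hss hEsv
  obtain ⟨hAqt, hst⟩ := aux_adjV hsq hEqt
  obtain ⟨hAvt, _⟩ := aux_adjU hst hEtv
  have hqp2 : ¬ ∃ a, unFwd σ A q a ∧ unFwd σ A a p :=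
    fun ⟨a, h1, h2⟩ => hpq2 ⟨a, h2.symm, h1.symm⟩
  have hnApu : ¬ A p u := fun h => hnEpu (aux_adjI1 hsp hu h)
  have hAup : A u p := aux_oppTF hsb hu hsp hnApu
  have hnAqu : ¬ A q u := fun h => hnEqu (aux_adjI1 hsq hu h)
  have hAuq : A u q := aux_oppTF hsb hu hsq hnAqu
  have hstn : s ≠ t := fun h => hpq2 ⟨s, hEps, by rw [h]; exact aux_comm hEqt⟩
  have hnEqs : ¬ unFwd σ A q s := fun h => hqp2 ⟨s, h, aux_comm hEps⟩
  have hnAqs : ¬ A q s := fun h => hnEqs (aux_adjI1 hsq hss h)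
  have hAsq : A s q := aux_oppTF hsb hss hsq hnAqs
  have hnEpt : ¬ unFwd σ A p t := fun h => hpq2 ⟨t, h, aux_comm hEqt⟩
  have hnApt : ¬ A p t := fun h => hnEpt (aux_adjI1 hsp hst h)
  have hAtp : A t p := aux_oppTF hsb hst hsp hnApt
  have hpv : p ≠ v := fun h => hqp2 ⟨t, hEqt, by rw [h]; exact hEtv⟩
  have hqv : q ≠ v := fun h => hpq2 ⟨s, hEps, by rw [h]; exact hEsv⟩
  have hus : u ≠ s := fun h => hnEpu (by rw [h]; exact hEps)
  have hut : u ≠ t := fun h => hnEqu (by rw [h]; exact hEqt)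
  obtain ⟨hAsp, hAtq⟩ :=
    (aux_lemA hsb hforb hc4 p s q t hsp hss hsq hst hpq hstn hAps hAsq hAqt hAtp).resolve_right
      (fun hh => hnAqs hh.1)
  have hnAsv : ¬ A s v := by
    intro hx
    rcases aux_lemA hsb hforb hc4 v u p s hv hu hsp hss (Ne.symm hpv) hus
      hAvu hAup hAps hx with ⟨hb, _⟩ | ⟨hb, _⟩
    · exact hAuv hb
    · exact hnApu hb
  have hnAtv : ¬ A t v := by
    intro hx
    rcases aux_lemA hsb hforb hc4 v u q t hv hu hsq hst (Ne.symm hqv) hut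
      hAvu hAuq hAqt hx with ⟨hb, _⟩ | ⟨hb, _⟩
    · exact hAuv hb
    · exact hnAqu hb
  have hfu : f ≠ u := fun h => hAuv (h ▸ hAfv)
  have hnApf : ¬ A p f := by
    intro hx
    rcases aux_lemA hsb hforb hc4 v u p f hv hu hsp hsf (Ne.symm hpv) (Ne.symm hfu)
      hAvu hAup hx hAfv with ⟨hb, _⟩ | ⟨hb, _⟩
    · exact hAuv hb
    · exact hnApu hb
  have hAfp : A f p := aux_oppTF hsb hsf hsp hnApf
  have hnAqf : ¬ A q f := by
    intro hx
    rcases aux_lemA hsb hforb hc4 v u q f hv hu hsq hsf (Ne.symm hqv) (Ne.symm hfu)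
      hAvu hAuq hx hAfv with ⟨hb, _⟩ | ⟨hb, _⟩
    · exact hAuv hb
    · exact hnAqu hb
  have hAfq : A f q := aux_oppTF hsb hsf hsq hnAqf
  exact aux_lemZ A (aux_nssA hsb) (aux_hN1A hforb) (aux_hN2A hforb) v s t f p q
    (hv.trans hsp.symm) (hv.trans hsq.symm) (hsf.trans hss.symm) (hsf.trans hst.symm)
    hstn hpq (Ne.symm hpv) (Ne.symm hqv)
    hAps hAsp hAqt hAtq hAvs hnAsv hAvt hnAtv hAsq hnAqs hAtp hnApt
    hAfv hAfp hnApf hAfq hnAqf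

/-- CRUX D : one far vertex adjacent to `u`, the other with a 2-path to `v`. -/
private lemma aux_cruxD (hsb : SemicompleteBipartite σ A)
    (hforb : ¬ ContainsHFORB σ A) (hc4 : ¬ InducedCopy (dirCyc 4) A)
    (v u : W) (hv : σ v = false) (hu : σ u = true) (hAvu : A v u) (hAuv : ¬ A u v)
    (f : W) (hAfv : A f v)
    (p q t : W) (hsp : σ p = false) (hsq : σ q = false) (hpq : p ≠ q)
    (hpq2 : ¬ ∃ a, unFwd σ A p a ∧ unFwd σ A a q)
    (hEpu : unFwd σ A p u) (hEqt : unFwd σ A q t) (hEtv : unFwd σ A t v) : False := by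
  have hsf : σ f = true := by
    cases hx : σ f
    · exact absurd (hx.trans hv.symm) (hsb.1 f v hAfv)
    · rfl
  obtain ⟨hApu, _⟩ := aux_adjV hsp hEpu
  obtain ⟨hAqt, hst⟩ := aux_adjV hsq hEqt
  obtain ⟨hAvt, _⟩ := aux_adjU hst hEtv
  have hqp2 : ¬ ∃ a, unFwd σ A q a ∧ unFwd σ A a p :=
    fun ⟨a, h1, h2⟩ => hpq2 ⟨a, h2.symm, h1.symm⟩
  have hnEqu : ¬ unFwd σ A q u := fun h => hpq2 ⟨u, hEpu, h.symm⟩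
  have hnAqu : ¬ A q u := fun h => hnEqu (aux_adjI1 hsq hu h)
  have hAuq : A u q := aux_oppTF hsb hu hsq hnAqu
  have hnEpt : ¬ unFwd σ A p t := fun h => hpq2 ⟨t, h, aux_comm hEqt⟩
  have hnApt : ¬ A p t := fun h => hnEpt (aux_adjI1 hsp hst h)
  have hAtp : A t p := aux_oppTF hsb hst hsp hnApt
  have hpv : p ≠ v := fun h => hqp2 ⟨t, hEqt, by rw [h]; exact hEtv⟩
  have hqv : q ≠ v := fun h => hnEqu (by rw [h]; exact aux_adjI1 hv hu hAvu)
  have hut : u ≠ t := fun h => hnEpt (by rw [← h]; exact hEpu)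
  have hnAtv : ¬ A t v := by
    intro hx
    rcases aux_lemA hsb hforb hc4 v u q t hv hu hsq hst (Ne.symm hqv) hut
      hAvu hAuq hAqt hx with ⟨hb, _⟩ | ⟨hb, _⟩
    · exact hAuv hb
    · exact hnAqu hb
  obtain ⟨hAup, hAtq⟩ :=
    (aux_lemA hsb hforb hc4 p u q t hsp hu hsq hst hpq hut hApu hAuq hAqt hAtp).resolve_right
      (fun hh => hnAqu hh.1)
  have hfu : f ≠ u := fun h => hAuv (h ▸ hAfv)
  have hft : f ≠ t := fun h => hnAtv (h ▸ hAfv)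
  have hnApf : ¬ A p f := by
    intro hx
    rcases aux_lemA hsb hforb hc4 p f v t hsp hsf hv hst hpv hft
      hx hAfv hAvt hAtp with ⟨_, hb⟩ | ⟨_, hb⟩
    · exact hnAtv hb
    · exact hnApt hb
  have hAfp : A f p := aux_oppTF hsb hsf hsp hnApf
  have hnAqf : ¬ A q f := by
    intro hx
    rcases aux_lemA hsb hforb hc4 q f v u hsq hsf hv hu hqv hfu
      hx hAfv hAvu hAuq with ⟨_, hb⟩ | ⟨_, hb⟩
    · exact hAuv hb
    · exact hnAqu hb
  have hAfq : A f q := aux_oppTF hsb hsf hsq hnAqf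
  exact aux_lemZ A (aux_nssA hsb) (aux_hN1A hforb) (aux_hN2A hforb) v u t f p q
    (hv.trans hsp.symm) (hv.trans hsq.symm) (hsf.trans hu.symm) (hsf.trans hst.symm)
    hut hpq (Ne.symm hpv) (Ne.symm hqv)
    hApu hAup hAqt hAtq hAvu hAuv hAvt hnAtv hAuq hnAqu hAtp hnApt
    hAfv hAfp hnApf hAfq hnAqf

/-- CRUX B2 : U-side, one vertex adjacent to `v`, the other with a 2-path to `u`. -/
private lemma aux_cruxB2 (hsb : SemicompleteBipartite σ A)
    (hforb : ¬ ContainsHFORB σ A) (hc4 : ¬ InducedCopy (dirCyc 4) A)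
    (v u : W) (hv : σ v = false) (hu : σ u = true) (hAvu : A v u) (hAuv : ¬ A u v)
    (r : W) (hAur : A u r)
    (p q t : W) (hsp : σ p = true) (hsq : σ q = true) (hpq : p ≠ q)
    (hpq2 : ¬ ∃ a, unFwd σ A p a ∧ unFwd σ A a q)
    (hEpv : unFwd σ A p v) (hEqt : unFwd σ A q t) (hEtu : unFwd σ A t u) : False := by
  have hsr : σ r = false := by
    cases hx : σ r
    · rfl
    · exact absurd (hu.trans hx.symm) (hsb.1 u r hAur)
  obtain ⟨hAvp, _⟩ := aux_adjU hsp hEpv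
  obtain ⟨hAtq, hst⟩ := aux_adjU hsq hEqt
  obtain ⟨hAtu, _⟩ := aux_adjV hst hEtu
  have hqp2 : ¬ ∃ a, unFwd σ A q a ∧ unFwd σ A a p :=
    fun ⟨a, h1, h2⟩ => hpq2 ⟨a, h2.symm, h1.symm⟩
  have hnEqv : ¬ unFwd σ A q v := fun h => hpq2 ⟨v, hEpv, h.symm⟩
  have hnAvq : ¬ A v q := fun h => hnEqv (aux_adjI2 hsq hv h)
  have hAqv : A q v := aux_oppTF hsb hsq hv hnAvq
  have hnEpt : ¬ unFwd σ A p t := fun h => hpq2 ⟨t, h, aux_comm hEqt⟩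
  have hnAtp : ¬ A t p := fun h => hnEpt (aux_adjI2 hsp hst h)
  have hApt : A p t := aux_oppTF hsb hsp hst hnAtp
  have hpu : p ≠ u := fun h => hqp2 ⟨t, hEqt, by rw [h]; exact hEtu⟩
  have hqu : q ≠ u := fun h => hnAvq (by rw [h]; exact hAvu)
  have hvt : v ≠ t := fun h => hnAvq (h.symm ▸ hAtq)
  have hnAut : ¬ A u t := by
    intro hx
    rcases aux_lemA hsb hforb hc4 v u t q hv hu hst hsq hvt (Ne.symm hqu)
      hAvu hx hAtq hAqv with ⟨hb, _⟩ | ⟨_, hb⟩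
    · exact hAuv hb
    · exact hnAvq hb
  by_cases hPw : ∃ a, unFwd σ A p a ∧ unFwd σ A a u
  · obtain ⟨w, hEpw, hEwu⟩ := hPw
    obtain ⟨hAwp, hsw⟩ := aux_adjU hsp hEpw
    obtain ⟨hAwu, _⟩ := aux_adjV hsw hEwu
    have hnEwq : ¬ unFwd σ A w q := fun h => hpq2 ⟨w, hEpw, h⟩
    have hnAwq : ¬ A w q := fun h => hnEwq (aux_adjI1 hsw hsq h)
    have hAqw : A q w := aux_oppTF hsb hsq hsw hnAwq
    have hwt : w ≠ t := fun h => hnEpt (by rw [← h]; exact hEpw)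
    have hnAuw : ¬ A u w := by
      intro hx
      rcases aux_lemA hsb hforb hc4 t u w p hst hu hsw hsp (Ne.symm hwt) (Ne.symm hpu)
        hAtu hx hAwp hApt with ⟨hb, _⟩ | ⟨_, hb⟩
      · exact hnAut hb
      · exact hnAtp hb
    obtain ⟨hApw, hAqt⟩ :=
      (aux_lemA hsb hforb hc4 w p t q hsw hsp hst hsq hwt hpq hAwp hApt hAtq hAqw).resolve_right
        (fun hh => hnAtp hh.1)
    have hrw : r ≠ w := fun h => hnAuw (h ▸ hAur)
    have hrt : r ≠ t := fun h => hnAut (h ▸ hAur)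
    have hnArq : ¬ A r q := by
      intro hx
      rcases aux_lemA hsb hforb hc4 w u r q hsw hu hsr hsq (Ne.symm hrw) (Ne.symm hqu)
        hAwu hAur hx hAqw with ⟨hb, _⟩ | ⟨_, hb⟩
      · exact hnAuw hb
      · exact hnAwq hb
    have hAqr : A q r := aux_oppTF hsb hsq hsr hnArq
    have hnArp : ¬ A r p := by
      intro hx
      rcases aux_lemA hsb hforb hc4 t u r p hst hu hsr hsp (Ne.symm hrt) (Ne.symm hpu)
        hAtu hAur hx hApt with ⟨hb, _⟩ | ⟨_, hb⟩
      · exact hnAut hb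
      · exact hnAtp hb
    have hApr : A p r := aux_oppTF hsb hsp hsr hnArp
    exact aux_lemZ (flip A) (aux_nssF hsb) (aux_hN1F hforb) (aux_hN2F hforb) u w t r p q
      (hu.trans hsp.symm) (hu.trans hsq.symm) (hsr.trans hsw.symm) (hsr.trans hst.symm)
      hwt hpq (Ne.symm hpu) (Ne.symm hqu)
      hAwp hApw hAtq hAqt hAwu hnAuw hAtu hnAut hAqw hnAwq hApt hnAtp
      hAur hApr hnArp hAqr hnArq
  · exact aux_claim1U hsb hforb hc4 t u hst hu hAtu hnAut p v hsp hpu hEpv hnEpt hPw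

/-- CRUX B3 : U-side, both vertices with 2-paths to `u`. -/
private lemma aux_cruxB3 (hsb : SemicompleteBipartite σ A)
    (hforb : ¬ ContainsHFORB σ A) (hc4 : ¬ InducedCopy (dirCyc 4) A)
    (v u : W) (hv : σ v = false) (hu : σ u = true) (hAvu : A v u) (hAuv : ¬ A u v)
    (r : W) (hAur : A u r)
    (p q s t : W) (hsp : σ p = true) (hsq : σ q = true) (hpq : p ≠ q)
    (hpq2 : ¬ ∃ a, unFwd σ A p a ∧ unFwd σ A a q)
    (hEps : unFwd σ A p s) (hEsu : unFwd σ A s u)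
    (hEqt : unFwd σ A q t) (hEtu : unFwd σ A t u)
    (hnEpv : ¬ unFwd σ A p v) (hnEqv : ¬ unFwd σ A q v) : False := by
  have hsr : σ r = false := by
    cases hx : σ r
    · rfl
    · exact absurd (hu.trans hx.symm) (hsb.1 u r hAur)
  obtain ⟨hAsp, hss⟩ := aux_adjU hsp hEps
  obtain ⟨hAsu, _⟩ := aux_adjV hss hEsu
  obtain ⟨hAtq, hst⟩ := aux_adjU hsq hEqt
  obtain ⟨hAtu, _⟩ := aux_adjV hst hEtu
  have hqp2 : ¬ ∃ a, unFwd σ A q a ∧ unFwd σ A a p :=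
    fun ⟨a, h1, h2⟩ => hpq2 ⟨a, h2.symm, h1.symm⟩
  have hnAvp : ¬ A v p := fun h => hnEpv (aux_adjI2 hsp hv h)
  have hApv : A p v := aux_oppTF hsb hsp hv hnAvp
  have hnAvq : ¬ A v q := fun h => hnEqv (aux_adjI2 hsq hv h)
  have hAqv : A q v := aux_oppTF hsb hsq hv hnAvq
  have hstn : s ≠ t := fun h => hpq2 ⟨s, hEps, by rw [h]; exact aux_comm hEqt⟩
  have hnEqs : ¬ unFwd σ A q s := fun h => hqp2 ⟨s, h, aux_comm hEps⟩
  have hnAsq : ¬ A s q := fun h => hnEqs (aux_adjI2 hsq hss h)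
  have hAqs : A q s := aux_oppTF hsb hsq hss hnAsq
  have hnEpt : ¬ unFwd σ A p t := fun h => hpq2 ⟨t, h, aux_comm hEqt⟩
  have hnAtp : ¬ A t p := fun h => hnEpt (aux_adjI2 hsp hst h)
  have hApt : A p t := aux_oppTF hsb hsp hst hnAtp
  have hpu : p ≠ u := fun h => hqp2 ⟨t, hEqt, by rw [h]; exact hEtu⟩
  have hqu : q ≠ u := fun h => hnAvq (by rw [h]; exact hAvu)
  have hsv : s ≠ v := fun h => hnAvp (h ▸ hAsp)
  have htv : t ≠ v := fun h => hnAvq (h ▸ hAtq)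
  have hnAus : ¬ A u s := by
    intro hx
    rcases aux_lemA hsb hforb hc4 v u s p hv hu hss hsp (Ne.symm hsv) (Ne.symm hpu)
      hAvu hx hAsp hApv with ⟨hb, _⟩ | ⟨_, hb⟩
    · exact hAuv hb
    · exact hnAvp hb
  have hnAut : ¬ A u t := by
    intro hx
    rcases aux_lemA hsb hforb hc4 v u t q hv hu hst hsq (Ne.symm htv) (Ne.symm hqu)
      hAvu hx hAtq hAqv with ⟨hb, _⟩ | ⟨_, hb⟩
    · exact hAuv hb
    · exact hnAvq hb
  obtain ⟨hAps, hAqt⟩ :=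
    (aux_lemA hsb hforb hc4 s p t q hss hsp hst hsq hstn hpq hAsp hApt hAtq hAqs).resolve_right
      (fun hh => hnAtp hh.1)
  have hrs : r ≠ s := fun h => hnAus (h ▸ hAur)
  have hrt : r ≠ t := fun h => hnAut (h ▸ hAur)
  have hnArp : ¬ A r p := by
    intro hx
    rcases aux_lemA hsb hforb hc4 t u r p hst hu hsr hsp (Ne.symm hrt) (Ne.symm hpu)
      hAtu hAur hx hApt with ⟨hb, _⟩ | ⟨_, hb⟩
    · exact hnAut hb
    · exact hnAtp hb
  have hApr : A p r := aux_oppTF hsb hsp hsr hnArp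
  have hnArq : ¬ A r q := by
    intro hx
    rcases aux_lemA hsb hforb hc4 s u r q hss hu hsr hsq (Ne.symm hrs) (Ne.symm hqu)
      hAsu hAur hx hAqs with ⟨hb, _⟩ | ⟨_, hb⟩
    · exact hnAus hb
    · exact hnAsq hb
  have hAqr : A q r := aux_oppTF hsb hsq hsr hnArq
  exact aux_lemZ (flip A) (aux_nssF hsb) (aux_hN1F hforb) (aux_hN2F hforb) u s t r p q
    (hu.trans hsp.symm) (hu.trans hsq.symm) (hsr.trans hss.symm) (hsr.trans hst.symm)
    hstn hpq (Ne.symm hpu) (Ne.symm hqu)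
    hAsp hAps hAtq hAqt hAsu hnAus hAtu hnAut hAqs hnAsq hApt hnAtp
    hAur hApr hnArp hAqr hnArq

end MainProof

/-- Cases 1 and 2 of the proof of Theorem 3.2: if `UN(H^→)` is connected with diameter
at least 4 (there are two vertices joined by no path of length ≤ 3), then `UN(H^←)` is a
complete bipartite graph, i.e. `uv ∈ A` for every `u ∈ U` and `v ∈ V`. -/
theorem stmt8 {W : Type*} [Fintype W] (σ : W → Bool) (A : W → W → Prop)
    (hsb : SemicompleteBipartite σ A)
    (hstrong : ∀ x y : W, Relation.ReflTransGen A x y)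
    (hforb : ¬ ContainsHFORB σ A)
    (hc4 : ¬ InducedCopy (dirCyc 4) A)
    (hconn : ∀ x y : W, Relation.ReflTransGen (unFwd σ A) x y)
    (hdiam : ∃ x y : W, ¬ x = y ∧ ¬ unFwd σ A x y ∧
      ¬ (∃ a, unFwd σ A x a ∧ unFwd σ A a y) ∧
      ¬ (∃ a b, unFwd σ A x a ∧ unFwd σ A a b ∧ unFwd σ A b y)) :
    ∀ u v : W, σ u = true → σ v = false → A u v := by
  classical
  intro u v hu hv
  by_contra hAuv
  have hAvu : A v u := (hsb.2 v u (by rw [hv, hu]; simp)).resolve_right hAuv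
  obtain ⟨x, y, hxy0, hd1, hd2, hd3⟩ := hdiam
  have hxy : x ≠ y := hxy0
  have hEvu : unFwd σ A v u := aux_adjI1 hv hu hAvu
  have hEuv : unFwd σ A u v := aux_comm hEvu
  have hd2s : ¬ ∃ a, unFwd σ A y a ∧ unFwd σ A a x :=
    fun ⟨a, h1, h2⟩ => hd2 ⟨a, h2.symm, h1.symm⟩
  have hd3s : ¬ ∃ a b, unFwd σ A y a ∧ unFwd σ A a b ∧ unFwd σ A b x :=
    fun ⟨a, b, h1, h2, h3⟩ => hd3 ⟨b, a, h3.symm, h2.symm, h1.symm⟩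
  obtain ⟨nx, hnx⟩ : ∃ n, unFwd σ A x n := by
    rcases (hconn x y).cases_head with h | ⟨n, hn, _⟩
    · exact absurd h hxy
    · exact ⟨n, hn⟩
  obtain ⟨ny, hny⟩ : ∃ n, unFwd σ A y n := by
    rcases (hconn y x).cases_head with h | ⟨n, hn, _⟩
    · exact absurd h (Ne.symm hxy)
    · exact ⟨n, hn⟩
  have huv : u ≠ v := fun h => by rw [h, hv] at hu; exact Bool.noConfusion hu
  obtain ⟨r0, hAur0⟩ : ∃ r, A u r := by
    rcases (hstrong u v).cases_head with h | ⟨r, hr, _⟩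
    · exact absurd h huv
    · exact ⟨r, hr⟩
  obtain ⟨f0, hAf0v⟩ : ∃ f, A f v := by
    rcases (hstrong u v).cases_tail with h | ⟨f, _, hf⟩
    · exact absurd h (Ne.symm huv)
    · exact ⟨f, hf⟩
  cases hsx : σ x with
  | false =>
    by_cases hxu : unFwd σ A x u
    · cases hsy : σ y with
      | false =>
        by_cases hyu : unFwd σ A y u
        · exact hd2 ⟨u, hxu, hyu.symm⟩
        · by_cases hyP : ∃ t, unFwd σ A y t ∧ unFwd σ A t v
          · obtain ⟨t, hyt, htv⟩ := hyP
            exact aux_cruxD hsb hforb hc4 v u hv hu hAvu hAuv f0 hAf0v x y t hsx hsy hxy hd2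
              hxu hyt htv
          · have hyv : y ≠ v := fun h => hyu (by rw [h]; exact hEvu)
            exact aux_claim1V hsb hforb hc4 v u hv hu hAvu hAuv y ny hsy hyv hny hyu hyP
      | true =>
        by_cases hyv : unFwd σ A y v
        · exact hd3 ⟨u, v, hxu, hEuv, hyv.symm⟩
        · by_cases hyP : ∃ t, unFwd σ A y t ∧ unFwd σ A t u
          · obtain ⟨t, hyt, htu⟩ := hyP
            exact hd3 ⟨u, t, hxu, htu.symm, hyt.symm⟩
          · have hyu : y ≠ u := fun h => hd1 (by rw [h]; exact hxu)
            exact aux_claim1U hsb hforb hc4 v u hv hu hAvu hAuv y ny hsy hyu hny hyv hyP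
    · by_cases hxP : ∃ s, unFwd σ A x s ∧ unFwd σ A s v
      · obtain ⟨s, hxs, hsv⟩ := hxP
        cases hsy : σ y with
        | false =>
          by_cases hyu : unFwd σ A y u
          · exact aux_cruxD hsb hforb hc4 v u hv hu hAvu hAuv f0 hAf0v y x s hsy hsx
              (Ne.symm hxy) hd2s hyu hxs hsv
          · by_cases hyP : ∃ t, unFwd σ A y t ∧ unFwd σ A t v
            · obtain ⟨t, hyt, htv⟩ := hyP
              exact aux_cruxA hsb hforb hc4 v u hv hu hAvu hAuv f0 hAf0v x y s t hsx hsy hxy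
                hd2 hxs hsv hyt htv hxu hyu
            · have hyv : y ≠ v := fun h => hd2 ⟨s, hxs, by rw [h]; exact hsv⟩
              exact aux_claim1V hsb hforb hc4 v u hv hu hAvu hAuv y ny hsy hyv hny hyu hyP
        | true =>
          by_cases hyv : unFwd σ A y v
          · exact hd3 ⟨s, v, hxs, hsv, hyv.symm⟩
          · by_cases hyP : ∃ t, unFwd σ A y t ∧ unFwd σ A t u
            · obtain ⟨t, hyt, htu⟩ := hyP
              exact aux_cruxC hsb hforb hc4 v u hv hu hAvu hAuv x y s t hsx hsy hd3
                hxs hsv hyt htu hxu hyv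
            · have hyu : y ≠ u := fun h => hyv (by rw [h]; exact hEuv)
              exact aux_claim1U hsb hforb hc4 v u hv hu hAvu hAuv y ny hsy hyu hny hyv hyP
      · have hxv : x ≠ v := fun h => hxu (by rw [h]; exact hEvu)
        exact aux_claim1V hsb hforb hc4 v u hv hu hAvu hAuv x nx hsx hxv hnx hxu hxP
  | true =>
    by_cases hxv : unFwd σ A x v
    · cases hsy : σ y with
      | false =>
        by_cases hyu : unFwd σ A y u
        · exact hd3 ⟨v, u, hxv, hEvu, hyu.symm⟩
        · by_cases hyP : ∃ t, unFwd σ A y t ∧ unFwd σ A t v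
          · obtain ⟨t, hyt, htv⟩ := hyP
            exact hd3 ⟨v, t, hxv, htv.symm, hyt.symm⟩
          · have hyv : y ≠ v := fun h => hd1 (by rw [h]; exact hxv)
            exact aux_claim1V hsb hforb hc4 v u hv hu hAvu hAuv y ny hsy hyv hny hyu hyP
      | true =>
        by_cases hyv : unFwd σ A y v
        · exact hd2 ⟨v, hxv, hyv.symm⟩
        · by_cases hyP : ∃ t, unFwd σ A y t ∧ unFwd σ A t u
          · obtain ⟨t, hyt, htu⟩ := hyP
            exact aux_cruxB2 hsb hforb hc4 v u hv hu hAvu hAuv r0 hAur0 x y t hsx hsy hxy hd2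
              hxv hyt htu
          · have hyu : y ≠ u := fun h => hd2 ⟨v, hxv, by rw [h]; exact hEvu⟩
            exact aux_claim1U hsb hforb hc4 v u hv hu hAvu hAuv y ny hsy hyu hny hyv hyP
    · by_cases hxP : ∃ s, unFwd σ A x s ∧ unFwd σ A s u
      · obtain ⟨s, hxs, hsu⟩ := hxP
        cases hsy : σ y with
        | false =>
          by_cases hyu : unFwd σ A y u
          · exact hd3 ⟨s, u, hxs, hsu, hyu.symm⟩
          · by_cases hyP : ∃ t, unFwd σ A y t ∧ unFwd σ A t v
            · obtain ⟨t, hyt, htv⟩ := hyP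
              exact aux_cruxC hsb hforb hc4 v u hv hu hAvu hAuv y x t s hsy hsx hd3s
                hyt htv hxs hsu hyu hxv
            · have hyv : y ≠ v := fun h => hyu (by rw [h]; exact hEvu)
              exact aux_claim1V hsb hforb hc4 v u hv hu hAvu hAuv y ny hsy hyv hny hyu hyP
        | true =>
          by_cases hyv : unFwd σ A y v
          · exact aux_cruxB2 hsb hforb hc4 v u hv hu hAvu hAuv r0 hAur0 y x s hsy hsx
              (Ne.symm hxy) hd2s hyv hxs hsu
          · by_cases hyP : ∃ t, unFwd σ A y t ∧ unFwd σ A t u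
            · obtain ⟨t, hyt, htu⟩ := hyP
              exact aux_cruxB3 hsb hforb hc4 v u hv hu hAvu hAuv r0 hAur0 x y s t hsx hsy hxy
                hd2 hxs hsu hyt htu hxv hyv
            · have hyu : y ≠ u := fun h => hd2 ⟨s, hxs, by rw [h]; exact hsu⟩
              exact aux_claim1U hsb hforb hc4 v u hv hu hAvu hAuv y ny hsy hyu hny hyv hyP
      · have hxu : x ≠ u := fun h => hxv (by rw [h]; exact hEuv)
        exact aux_claim1U hsb hforb hc4 v u hv hu hAvu hAuv x nx hsx hxu hnx hxv hxP

end SBD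
end

section
/- Let H be a semicomplete bipartite digraph that contains no induced subdigraph belonging to the family HFORB but does contain the directed 4-cycle as an induced subdigraph. Then H is an extension of the directed 4-cycle; that is, V(H) can be partitioned into four nonempty sets W_1, W_2, W_3, W_4 such that the arc set of H is exactly (W_1×W_2) ∪ (W_2×W_3) ∪ (W_3×W_4) ∪ (W_4×W_1). -/
namespace SBD

section proofAux
variable {W : Type*} {σ : W → Bool} {A : W → W → Prop}

private lemma boolt {a b c : Bool} (h1 : a ≠ b) (h2 : b ≠ c) : a = c := by
  revert h1 h2; cases a <;> cases b <;> cases c <;> simp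

private lemma inj4 {w0 w1 w2 w3 : W} (h01 : w0 ≠ w1) (h02 : w0 ≠ w2) (h03 : w0 ≠ w3)
    (h12 : w1 ≠ w2) (h13 : w1 ≠ w3) (h23 : w2 ≠ w3) :
    Function.Injective ![w0, w1, w2, w3] := by
  intro a b hab; fin_cases a <;> fin_cases b <;> simp_all

private lemma inj5 {w0 w1 w2 w3 w4 : W} (h01 : w0 ≠ w1) (h02 : w0 ≠ w2) (h03 : w0 ≠ w3)
    (h04 : w0 ≠ w4) (h12 : w1 ≠ w2) (h13 : w1 ≠ w3) (h14 : w1 ≠ w4)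
    (h23 : w2 ≠ w3) (h24 : w2 ≠ w4) (h34 : w3 ≠ w4) :
    Function.Injective ![w0, w1, w2, w3, w4] := by
  intro a b hab; fin_cases a <;> fin_cases b <;> simp_all

/-- rotating an induced directed 4-cycle gives an induced directed 4-cycle -/
private lemma rotC (c : ZMod 4 → W) (hC : ∀ a b : ZMod 4, b = a + 1 ↔ A (c a) (c b))
    (r : ZMod 4) : ∀ a b : ZMod 4, b = a + 1 ↔ A (c (r + a)) (c (r + b)) := by
  intro a b
  rw [← hC (r + a) (r + b)]
  constructor
  · rintro rfl; ring
  · intro h; exact add_left_cancel (h.trans (add_assoc r a 1))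

/-- no 2-cycle between any vertex and `c 0`. -/
private lemma no2_base (hsb : SemicompleteBipartite σ A)
    (hforb : ¬ (InducedCopy C4P A ∨ InducedCopy C4PP A))
    (c : ZMod 4 → W) (hcinj : Function.Injective c)
    (hC : ∀ a b : ZMod 4, b = a + 1 ↔ A (c a) (c b)) (x : W) :
    ¬ (A x (c 0) ∧ A (c 0) x) := by
  rintro ⟨hx0, h0x⟩
  have cne : ∀ i j : ZMod 4, i ≠ j → c i ≠ c j := fun i j h e => h (hcinj e)
  have a01 : A (c 0) (c 1) := (hC 0 1).mp (by decide)
  have a12 : A (c 1) (c 2) := (hC 1 2).mp (by decide)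
  have a23 : A (c 2) (c 3) := (hC 2 3).mp (by decide)
  have a30 : A (c 3) (c 0) := (hC 3 0).mp (by decide)
  have n10 : ¬ A (c 1) (c 0) := fun h => (by decide : ¬(0:ZMod 4) = 1+1) ((hC 1 0).mpr h)
  have n21 : ¬ A (c 2) (c 1) := fun h => (by decide : ¬(1:ZMod 4) = 2+1) ((hC 2 1).mpr h)
  have n32 : ¬ A (c 3) (c 2) := fun h => (by decide : ¬(2:ZMod 4) = 3+1) ((hC 3 2).mpr h)
  have n03 : ¬ A (c 0) (c 3) := fun h => (by decide : ¬(3:ZMod 4) = 0+1) ((hC 0 3).mpr h)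
  have n02 : ¬ A (c 0) (c 2) := fun h => (by decide : ¬(2:ZMod 4) = 0+1) ((hC 0 2).mpr h)
  have n20 : ¬ A (c 2) (c 0) := fun h => (by decide : ¬(0:ZMod 4) = 2+1) ((hC 2 0).mpr h)
  have n13 : ¬ A (c 1) (c 3) := fun h => (by decide : ¬(3:ZMod 4) = 1+1) ((hC 1 3).mpr h)
  have n31 : ¬ A (c 3) (c 1) := fun h => (by decide : ¬(1:ZMod 4) = 3+1) ((hC 3 1).mpr h)
  have nsame : ∀ u v : W, σ u = σ v → ¬ A u v := fun u v h ha => hsb.1 u v ha h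
  have hs01 : σ (c 0) ≠ σ (c 1) := hsb.1 _ _ a01
  have hs12 : σ (c 1) ≠ σ (c 2) := hsb.1 _ _ a12
  have hsx : σ x ≠ σ (c 0) := hsb.1 _ _ hx0
  have e02 : σ (c 0) = σ (c 2) := boolt hs01 hs12
  have exc1 : σ x = σ (c 1) := boolt hsx hs01
  have exc3 : σ x = σ (c 3) := by
    have hs23 : σ (c 2) ≠ σ (c 3) := hsb.1 _ _ a23
    exact exc1.trans (boolt hs12 hs23)
  have nx1 : ¬ A x (c 1) := nsame _ _ exc1
  have n1x : ¬ A (c 1) x := nsame _ _ exc1.symm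
  have nx3 : ¬ A x (c 3) := nsame _ _ exc3
  have n3x : ¬ A (c 3) x := nsame _ _ exc3.symm
  have nxx : ¬ A x x := nsame x x rfl
  have nd0 : ¬ A (c 0) (c 0) := nsame _ _ rfl
  have nd1 : ¬ A (c 1) (c 1) := nsame _ _ rfl
  have nd2 : ¬ A (c 2) (c 2) := nsame _ _ rfl
  have nd3 : ¬ A (c 3) (c 3) := nsame _ _ rfl
  have xne0 : x ≠ c 0 := fun h => hsx (by rw [h])
  have xne2 : x ≠ c 2 := fun h => hsx (by rw [h, e02])
  have xne1 : x ≠ c 1 := fun h => n10 (h ▸ hx0)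
  have xne3 : x ≠ c 3 := fun h => n03 (h ▸ h0x)
  by_cases h2a : A x (c 2) <;> by_cases h2b : A (c 2) x
  · refine hforb (Or.inr ⟨![c 0, c 2, x, c 3], inj4 (cne 0 2 (by decide)) xne0.symm
      (cne 0 3 (by decide)) xne2.symm (cne 2 3 (by decide)) xne3, ?_⟩)
    intro a b; fin_cases a <;> fin_cases b <;> simp [C4PP] <;> tauto
  · refine hforb (Or.inl ⟨![c 0, c 2, x, c 3], inj4 (cne 0 2 (by decide)) xne0.symm
      (cne 0 3 (by decide)) xne2.symm (cne 2 3 (by decide)) xne3, ?_⟩)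
    intro a b; fin_cases a <;> fin_cases b <;> simp [C4P] <;> tauto
  · refine hforb (Or.inl ⟨![x, c 1, c 0, c 2], inj4 xne1 xne0 xne2
      (cne 1 0 (by decide)) (cne 1 2 (by decide)) (cne 0 2 (by decide)), ?_⟩)
    intro a b; fin_cases a <;> fin_cases b <;> simp [C4P] <;> tauto
  · rcases hsb.2 x (c 2) (fun h => hsx (h.trans e02.symm)) with h | h
    · exact h2a h
    · exact h2b h

private lemma no2' (hsb : SemicompleteBipartite σ A)
    (hforb : ¬ (InducedCopy C4P A ∨ InducedCopy C4PP A))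
    (c : ZMod 4 → W) (hcinj : Function.Injective c)
    (hC : ∀ a b : ZMod 4, b = a + 1 ↔ A (c a) (c b)) :
    ∀ (i : ZMod 4) (x : W), ¬ (A x (c i) ∧ A (c i) x) := by
  intro i x h
  apply no2_base hsb hforb (fun j => c (i + j))
    (fun a b hab => add_left_cancel (hcinj hab)) (rotC c hC i) x
  simpa using h

/-- classification of vertices on the side of `c 0`. -/
private lemma classify_base (hsb : SemicompleteBipartite σ A)
    (hforb : ¬ (InducedCopy Hstar A ∨ InducedCopy (flip Hstar) A))
    (c : ZMod 4 → W)
    (no2 : ∀ (i : ZMod 4) (x : W), ¬ (A x (c i) ∧ A (c i) x))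
    (hcinj : Function.Injective c)
    (hC : ∀ a b : ZMod 4, b = a + 1 ↔ A (c a) (c b)) {x : W} (hx : σ x = σ (c 0)) :
    (A x (c 1) ∧ A (c 3) x ∧ ¬A (c 1) x ∧ ¬A x (c 3)) ∨
    (A (c 1) x ∧ A x (c 3) ∧ ¬A x (c 1) ∧ ¬A (c 3) x) := by
  have cne : ∀ i j : ZMod 4, i ≠ j → c i ≠ c j := fun i j h e => h (hcinj e)
  have a01 : A (c 0) (c 1) := (hC 0 1).mp (by decide)
  have a12 : A (c 1) (c 2) := (hC 1 2).mp (by decide)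
  have a23 : A (c 2) (c 3) := (hC 2 3).mp (by decide)
  have a30 : A (c 3) (c 0) := (hC 3 0).mp (by decide)
  have n10 : ¬ A (c 1) (c 0) := fun h => (by decide : ¬(0:ZMod 4) = 1+1) ((hC 1 0).mpr h)
  have n21 : ¬ A (c 2) (c 1) := fun h => (by decide : ¬(1:ZMod 4) = 2+1) ((hC 2 1).mpr h)
  have n32 : ¬ A (c 3) (c 2) := fun h => (by decide : ¬(2:ZMod 4) = 3+1) ((hC 3 2).mpr h)
  have n03 : ¬ A (c 0) (c 3) := fun h => (by decide : ¬(3:ZMod 4) = 0+1) ((hC 0 3).mpr h)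
  have n02 : ¬ A (c 0) (c 2) := fun h => (by decide : ¬(2:ZMod 4) = 0+1) ((hC 0 2).mpr h)
  have n20 : ¬ A (c 2) (c 0) := fun h => (by decide : ¬(0:ZMod 4) = 2+1) ((hC 2 0).mpr h)
  have n13 : ¬ A (c 1) (c 3) := fun h => (by decide : ¬(3:ZMod 4) = 1+1) ((hC 1 3).mpr h)
  have n31 : ¬ A (c 3) (c 1) := fun h => (by decide : ¬(1:ZMod 4) = 3+1) ((hC 3 1).mpr h)
  have nsame : ∀ u v : W, σ u = σ v → ¬ A u v := fun u v h ha => hsb.1 u v ha h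
  have hs01 : σ (c 0) ≠ σ (c 1) := hsb.1 _ _ a01
  have hs12 : σ (c 1) ≠ σ (c 2) := hsb.1 _ _ a12
  have hs23 : σ (c 2) ≠ σ (c 3) := hsb.1 _ _ a23
  have e02 : σ (c 0) = σ (c 2) := boolt hs01 hs12
  have e13 : σ (c 1) = σ (c 3) := boolt hs12 hs23
  have hd1 : σ x ≠ σ (c 1) := by rw [hx]; exact hs01
  have hd3 : σ x ≠ σ (c 3) := by rw [hx, e02]; exact hs23
  have nx0 : ¬ A x (c 0) := nsame _ _ hx
  have n0x : ¬ A (c 0) x := nsame _ _ hx.symm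
  have nx2 : ¬ A x (c 2) := nsame _ _ (hx.trans e02)
  have n2x : ¬ A (c 2) x := nsame _ _ (hx.trans e02).symm
  have nxx : ¬ A x x := nsame x x rfl
  have nd0 : ¬ A (c 0) (c 0) := nsame _ _ rfl
  have nd1 : ¬ A (c 1) (c 1) := nsame _ _ rfl
  have nd2 : ¬ A (c 2) (c 2) := nsame _ _ rfl
  have nd3 : ¬ A (c 3) (c 3) := nsame _ _ rfl
  have xne1 : x ≠ c 1 := fun h => hd1 (by rw [h])
  have xne3 : x ≠ c 3 := fun h => hd3 (by rw [h])
  have h1 : (A x (c 1) ∧ ¬A (c 1) x) ∨ (A (c 1) x ∧ ¬A x (c 1)) := by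
    rcases hsb.2 x (c 1) hd1 with h | h
    · exact Or.inl ⟨h, fun h' => no2 1 x ⟨h, h'⟩⟩
    · exact Or.inr ⟨h, fun h' => no2 1 x ⟨h', h⟩⟩
  have h3 : (A x (c 3) ∧ ¬A (c 3) x) ∨ (A (c 3) x ∧ ¬A x (c 3)) := by
    rcases hsb.2 x (c 3) hd3 with h | h
    · exact Or.inl ⟨h, fun h' => no2 3 x ⟨h, h'⟩⟩
    · exact Or.inr ⟨h, fun h' => no2 3 x ⟨h', h⟩⟩
  rcases h1 with ⟨p1, q1⟩ | ⟨p1, q1⟩ <;> rcases h3 with ⟨p3, q3⟩ | ⟨p3, q3⟩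
  · exfalso
    have xne0 : x ≠ c 0 := fun h => q3 (h ▸ a30)
    have xne2 : x ≠ c 2 := fun h => q1 (h ▸ a12)
    refine hforb (Or.inr ⟨![c 1, c 3, c 0, c 2, x], inj5 (cne 1 3 (by decide))
      (cne 1 0 (by decide)) (cne 1 2 (by decide)) xne1.symm (cne 3 0 (by decide))
      (cne 3 2 (by decide)) xne3.symm (cne 0 2 (by decide)) xne0.symm xne2.symm, ?_⟩)
    intro a b; fin_cases a <;> fin_cases b <;> simp [Hstar, flip] <;> tauto
  · exact Or.inl ⟨p1, p3, q1, q3⟩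
  · exact Or.inr ⟨p1, p3, q1, q3⟩
  · exfalso
    have xne0 : x ≠ c 0 := fun h => q1 (h ▸ a01)
    have xne2 : x ≠ c 2 := fun h => q3 (h ▸ a23)
    refine hforb (Or.inl ⟨![c 1, c 3, c 2, c 0, x], inj5 (cne 1 3 (by decide))
      (cne 1 2 (by decide)) (cne 1 0 (by decide)) xne1.symm (cne 3 2 (by decide))
      (cne 3 0 (by decide)) xne3.symm (cne 2 0 (by decide)) xne2.symm xne0.symm, ?_⟩)
    intro a b; fin_cases a <;> fin_cases b <;> simp [Hstar] <;> tauto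

/-- adjacency between consecutive classes. -/
private lemma adj_base (hsb : SemicompleteBipartite σ A)
    (hforb : ¬ (InducedCopy C4P A ∨ InducedCopy Hstar A))
    (c : ZMod 4 → W) (hcinj : Function.Injective c)
    (hC : ∀ a b : ZMod 4, b = a + 1 ↔ A (c a) (c b)) {x y : W}
    (hx : A x (c 1) ∧ A (c 3) x ∧ ¬A (c 1) x ∧ ¬A x (c 3))
    (hy : A y (c 2) ∧ A (c 0) y ∧ ¬A (c 2) y ∧ ¬A y (c 0)) :
    A x y ∧ ¬ A y x := by
  obtain ⟨x1, x2, x3, x4⟩ := hx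
  obtain ⟨y1, y2, y3, y4⟩ := hy
  have cne : ∀ i j : ZMod 4, i ≠ j → c i ≠ c j := fun i j h e => h (hcinj e)
  have a01 : A (c 0) (c 1) := (hC 0 1).mp (by decide)
  have a12 : A (c 1) (c 2) := (hC 1 2).mp (by decide)
  have a23 : A (c 2) (c 3) := (hC 2 3).mp (by decide)
  have a30 : A (c 3) (c 0) := (hC 3 0).mp (by decide)
  have n32 : ¬ A (c 3) (c 2) := fun h => (by decide : ¬(2:ZMod 4) = 3+1) ((hC 3 2).mpr h)
  have n03 : ¬ A (c 0) (c 3) := fun h => (by decide : ¬(3:ZMod 4) = 0+1) ((hC 0 3).mpr h)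
  have n02 : ¬ A (c 0) (c 2) := fun h => (by decide : ¬(2:ZMod 4) = 0+1) ((hC 0 2).mpr h)
  have n20 : ¬ A (c 2) (c 0) := fun h => (by decide : ¬(0:ZMod 4) = 2+1) ((hC 2 0).mpr h)
  have nsame : ∀ u v : W, σ u = σ v → ¬ A u v := fun u v h ha => hsb.1 u v ha h
  have hs01 : σ (c 0) ≠ σ (c 1) := hsb.1 _ _ a01
  have hs12 : σ (c 1) ≠ σ (c 2) := hsb.1 _ _ a12
  have hs23 : σ (c 2) ≠ σ (c 3) := hsb.1 _ _ a23
  have e02 : σ (c 0) = σ (c 2) := boolt hs01 hs12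
  have e13 : σ (c 1) = σ (c 3) := boolt hs12 hs23
  have exc0 : σ x = σ (c 0) := boolt (hsb.1 _ _ x1) hs01.symm
  have eyc1 : σ y = σ (c 1) := boolt (hsb.1 _ _ y1) hs12.symm
  have hxy_ne : σ x ≠ σ y := by rw [exc0, eyc1]; exact hs01
  have nxc2 : ¬ A x (c 2) := nsame _ _ (exc0.trans e02)
  have nc2x : ¬ A (c 2) x := nsame _ _ (exc0.trans e02).symm
  have nxc0 : ¬ A x (c 0) := nsame _ _ exc0
  have nc0x : ¬ A (c 0) x := nsame _ _ exc0.symm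
  have nyc3 : ¬ A y (c 3) := nsame _ _ (eyc1.trans e13)
  have nc3y : ¬ A (c 3) y := nsame _ _ (eyc1.trans e13).symm
  have nyc1 : ¬ A y (c 1) := nsame _ _ eyc1
  have nc1y : ¬ A (c 1) y := nsame _ _ eyc1.symm
  have nxx : ¬ A x x := nsame x x rfl
  have nyy : ¬ A y y := nsame y y rfl
  have nd0 : ¬ A (c 0) (c 0) := nsame _ _ rfl
  have nd1 : ¬ A (c 1) (c 1) := nsame _ _ rfl
  have nd2 : ¬ A (c 2) (c 2) := nsame _ _ rfl
  have nd3 : ¬ A (c 3) (c 3) := nsame _ _ rfl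
  have xney : x ≠ y := fun h => hxy_ne (by rw [h])
  have xnec3 : x ≠ c 3 := fun h => hs23 ((e02.symm.trans exc0.symm).trans (congrArg σ h))
  have ynec3 : y ≠ c 3 := fun h => n32 (h ▸ y1)
  have ynec2 : y ≠ c 2 := fun h => hs12 (by rw [← eyc1, h])
  have hnyx : ¬ A y x := by
    intro hyx
    by_cases hxy : A x y
    · have xnec2 : x ≠ c 2 := fun h => y3 (h ▸ hxy)
      refine hforb (Or.inl ⟨![x, c 2, y, c 3], inj4 xnec2 xney xnec3 ynec2.symm
        (cne 2 3 (by decide)) ynec3, ?_⟩)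
      intro a b; fin_cases a <;> fin_cases b <;> simp [C4P] <;> tauto
    · have xnec0 : x ≠ c 0 := fun h => hxy (by rw [h]; exact y2)
      have xnec2' : x ≠ c 2 := fun h => x4 (h ▸ a23)
      have ynec0 : y ≠ c 0 := fun h => hs01 (by rw [← eyc1, h])
      refine hforb (Or.inr ⟨![y, c 3, c 2, c 0, x], inj5 ynec3 ynec2 ynec0 xney.symm
        (cne 3 2 (by decide)) (cne 3 0 (by decide))
        (fun h => hs23 (by rw [← e02, ← exc0, ← h])) (cne 2 0 (by decide)) xnec2'.symm
        xnec0.symm, ?_⟩)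
      intro a b; fin_cases a <;> fin_cases b <;> simp [Hstar] <;> tauto
  exact ⟨(hsb.2 x y hxy_ne).resolve_right hnyx, hnyx⟩

/-- the class of a vertex relative to the induced 4-cycle `c`. -/
private def cls (A : W → W → Prop) (c : ZMod 4 → W) (x : W) (i : ZMod 4) : Prop :=
  A x (c (i + 1)) ∧ A (c (i + 3)) x ∧ ¬A (c (i + 1)) x ∧ ¬A x (c (i + 3))

private lemma classify' (hsb : SemicompleteBipartite σ A)
    (hforbC : ¬ (InducedCopy C4P A ∨ InducedCopy C4PP A))
    (hforbH : ¬ (InducedCopy Hstar A ∨ InducedCopy (flip Hstar) A))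
    (c : ZMod 4 → W) (hcinj : Function.Injective c)
    (hC : ∀ a b : ZMod 4, b = a + 1 ↔ A (c a) (c b)) (r : ZMod 4) {x : W}
    (hx : σ x = σ (c r)) : cls A c x r ∨ cls A c x (r + 2) := by
  have no2all := no2' hsb hforbC c hcinj hC
  have h := classify_base hsb hforbH (fun j => c (r + j)) (fun i x => no2all (r + i) x)
    (fun a b hab => add_left_cancel (hcinj hab)) (rotC c hC r)
    (x := x) (by simpa using hx)
  have e1 : r + 2 + 1 = r + 3 := by ring
  have e2 : r + 2 + 3 = r + 1 := by
    have h23 : (2 + 3 : ZMod 4) = 1 := by decide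
    rw [add_assoc, h23]
  rcases h with h | h
  · exact Or.inl h
  · right
    unfold cls
    rw [e1, e2]
    exact ⟨h.2.1, h.1, h.2.2.2, h.2.2.1⟩

private lemma adj' (hsb : SemicompleteBipartite σ A)
    (hforb : ¬ (InducedCopy C4P A ∨ InducedCopy Hstar A))
    (c : ZMod 4 → W) (hcinj : Function.Injective c)
    (hC : ∀ a b : ZMod 4, b = a + 1 ↔ A (c a) (c b)) (i : ZMod 4) {x y : W}
    (hx : cls A c x i) (hy : cls A c y (i + 1)) : A x y ∧ ¬ A y x := by
  have e1 : i + 1 + 1 = i + 2 := by ring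
  have e2 : i + 1 + 3 = i + 0 := by
    have h13 : (1 + 3 : ZMod 4) = 0 := by decide
    rw [add_assoc, h13]
  unfold cls at hx hy
  rw [e1, e2] at hy
  exact adj_base hsb hforb (fun j => c (i + j))
    (fun a b hab => add_left_cancel (hcinj hab)) (rotC c hC i) hx hy

private lemma cls_side (hsb : SemicompleteBipartite σ A) (c : ZMod 4 → W)
    (hC : ∀ a b : ZMod 4, b = a + 1 ↔ A (c a) (c b)) {x : W} {i : ZMod 4}
    (h : cls A c x i) : σ x = σ (c i) := by
  have a1 : A (c i) (c (i + 1)) := (hC i (i + 1)).mp rfl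
  exact boolt (hsb.1 _ _ h.1) (hsb.1 _ _ a1).symm

private lemma cls_unique (hsb : SemicompleteBipartite σ A) (c : ZMod 4 → W)
    (hC : ∀ a b : ZMod 4, b = a + 1 ↔ A (c a) (c b)) {x : W} {i j : ZMod 4}
    (hi : cls A c x i) (hj : cls A c x j) : i = j := by
  have harc : ∀ s : ZMod 4, σ (c s) ≠ σ (c (s + 1)) :=
    fun s => hsb.1 _ _ ((hC s (s + 1)).mp rfl)
  have hsi := cls_side hsb c hC hi
  have hsj := cls_side hsb c hC hj
  have quad : ∀ a b : ZMod 4, b = a ∨ b = a + 1 ∨ b = a + 2 ∨ b = a + 3 := by decide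
  rcases quad i j with rfl | rfl | rfl | rfl
  · rfl
  · exact absurd (hsi.symm.trans hsj) (harc i)
  · exfalso
    have h2 : A x (c (i + 2 + 1)) := hj.1
    rw [(show i + 2 + 1 = i + 3 by
      have h21 : (2 + 1 : ZMod 4) = 3 := by decide
      rw [add_assoc, h21])] at h2
    exact hi.2.2.2 h2
  · exfalso
    have k1 : σ (c (i + 3)) ≠ σ (c (i + 3 + 1)) := harc (i + 3)
    rw [(show i + 3 + 1 = i by
      have h31 : (3 + 1 : ZMod 4) = 0 := by decide
      rw [add_assoc, h31, add_zero])] at k1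
    exact k1 (hsj.symm.trans hsi)

private lemma cls_exists (hsb : SemicompleteBipartite σ A)
    (hforbC : ¬ (InducedCopy C4P A ∨ InducedCopy C4PP A))
    (hforbH : ¬ (InducedCopy Hstar A ∨ InducedCopy (flip Hstar) A))
    (c : ZMod 4 → W) (hcinj : Function.Injective c)
    (hC : ∀ a b : ZMod 4, b = a + 1 ↔ A (c a) (c b)) (x : W) :
    ∃ i, cls A c x i := by
  have a1 : A (c 0) (c 1) := (hC 0 1).mp (by decide)
  have hs01 : σ (c 0) ≠ σ (c 1) := hsb.1 _ _ a1
  by_cases hx : σ x = σ (c 0)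
  · rcases classify' hsb hforbC hforbH c hcinj hC 0 hx with h | h
    · exact ⟨0, h⟩
    · exact ⟨0 + 2, h⟩
  · have hx1 : σ x = σ (c 1) := boolt hx hs01
    rcases classify' hsb hforbC hforbH c hcinj hC 1 hx1 with h | h
    · exact ⟨1, h⟩
    · exact ⟨1 + 2, h⟩

end proofAux

/-- Theorem 3.4: a semicomplete bipartite digraph with no induced subdigraph from HFORB
that contains an induced directed 4-cycle is an extension of the directed 4-cycle. -/
theorem stmt10 {W : Type*} [Fintype W] (σ : W → Bool) (A : W → W → Prop)
    (hsb : SemicompleteBipartite σ A)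
    (hforb : ¬ ContainsHFORB σ A)
    (hc4 : InducedCopy (dirCyc 4) A) :
    ∃ g : W → ZMod 4, Function.Surjective g ∧ ∀ x y : W, A x y ↔ g y = g x + 1 := by
  obtain ⟨c, hcinj, hc⟩ := hc4
  have hC : ∀ a b : ZMod 4, b = a + 1 ↔ A (c a) (c b) := hc
  have hforbC : ¬ (InducedCopy C4P A ∨ InducedCopy C4PP A) := fun h =>
    hforb (h.elim Or.inl (fun h2 => Or.inr (Or.inr (Or.inl h2))))
  have hforbH : ¬ (InducedCopy Hstar A ∨ InducedCopy (flip Hstar) A) := fun h =>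
    hforb (h.elim (fun h1 => Or.inr (Or.inr (Or.inr (Or.inr (Or.inl h1)))))
      (fun h2 => Or.inr (Or.inr (Or.inr (Or.inr (Or.inr (Or.inl h2)))))))
  have hforbCH : ¬ (InducedCopy C4P A ∨ InducedCopy Hstar A) := fun h =>
    hforb (h.elim Or.inl (fun h2 => Or.inr (Or.inr (Or.inr (Or.inr (Or.inl h2))))))
  have hex : ∀ x : W, ∃ i, cls A c x i := cls_exists hsb hforbC hforbH c hcinj hC
  choose g hg using hex
  have harcσ : ∀ s : ZMod 4, σ (c s) ≠ σ (c (s + 1)) :=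
    fun s => hsb.1 _ _ ((hC s (s + 1)).mp rfl)
  refine ⟨g, ?_, ?_⟩
  · intro i
    refine ⟨c i, cls_unique hsb c hC (hg (c i)) ?_⟩
    exact ⟨(hC i (i + 1)).mp rfl,
      (hC (i + 3) i).mp ((by decide : ∀ s : ZMod 4, s = s + 3 + 1) i),
      fun h => (by decide : ∀ s : ZMod 4, ¬ s = s + 1 + 1) i ((hC (i + 1) i).mpr h),
      fun h => (by decide : ∀ s : ZMod 4, ¬ s + 3 = s + 1) i ((hC i (i + 3)).mpr h)⟩
  · intro x y
    constructor
    · intro hxy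
      have quad : ∀ a b : ZMod 4, b = a ∨ b = a + 1 ∨ b = a + 2 ∨ b = a + 3 := by decide
      rcases quad (g x) (g y) with h | h | h | h
      · exfalso
        have e1 := cls_side hsb c hC (hg x)
        have e2 := cls_side hsb c hC (hg y)
        rw [h] at e2
        exact hsb.1 x y hxy (e1.trans e2.symm)
      · exact h
      · exfalso
        have e1 := cls_side hsb c hC (hg x)
        have e2 := cls_side hsb c hC (hg y)
        rw [h] at e2
        have e3 : σ (c (g x)) = σ (c (g x + 2)) := by
          have k1 := harcσ (g x)
          have k2 := harcσ (g x + 1)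
          rw [(show g x + 1 + 1 = g x + 2 by ring)] at k2
          exact boolt k1 k2
        exact hsb.1 x y hxy (e1.trans (e3.trans e2.symm))
      · exfalso
        have hy' : cls A c y (g x + 3) := by rw [← h]; exact hg y
        have hx' : cls A c x (g x + 3 + 1) := by
          rw [(show g x + 3 + 1 = g x from (by decide : ∀ s : ZMod 4, s + 3 + 1 = s) (g x))]
          exact hg x
        exact (adj' hsb hforbCH c hcinj hC (g x + 3) hy' hx').2 hxy
    · intro h
      have hy' : cls A c y (g x + 1) := by rw [← h]; exact hg y
      exact (adj' hsb hforbCH c hcinj hC (g x) (hg x) hy').1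


end SBD
end

section
/- Let H = (V,U;A) be a semicomplete bipartite digraph that contains no induced subdigraph belonging to the family HFORB but contains the directed 4-cycle as an induced subdigraph, and let C = v_1 u_1 v_2 u_2 v_1 be an induced directed 4-cycle of H with v_1, v_2 ∈ V and u_1, u_2 ∈ U. For i = 1, 2 set M(v_i) = {u ∈ U : u v_i ∈ A and v_i u ∈ A}, M^+(v_i) = {u ∈ U : v_i u ∈ A, u v_i ∉ A} and M^-(v_i) = {u ∈ U : u v_i ∈ A, v_i u ∉ A}. Then M(v_1) = M(v_2) = ∅, M^+(v_1) = M^-(v_2) and M^-(v_1) = M^+(v_2). -/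
namespace SBD

section Helpers
variable {W : Type*} {σ : W → Bool} {A : W → W → Prop}

lemma sideNe {x y : W} (hx : σ x = false) (hy : σ y = true) : x ≠ y := by
  intro h; rw [h, hy] at hx; exact Bool.noConfusion hx

lemma noM (hsb : SemicompleteBipartite σ A) (hforb : ¬ ContainsHFORB σ A)
    (v₁ v₂ u₁ u₂ : W)
    (hv₁ : σ v₁ = false) (hv₂ : σ v₂ = false) (hu₁ : σ u₁ = true) (hu₂ : σ u₂ = true)
    (ha₁ : A v₁ u₁) (ha₂ : A u₁ v₂) (ha₃ : A v₂ u₂) (ha₄ : A u₂ v₁)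
    (hn₁ : ¬ A u₁ v₁) (hn₂ : ¬ A v₂ u₁) (hn₃ : ¬ A u₂ v₂) (hn₄ : ¬ A v₁ u₂)
    (u : W) (hu : σ u = true) (h1 : A u v₁) (h2 : A v₁ u) : False := by
  have hns : ∀ x y : W, σ x = σ y → ¬ A x y := fun x y h hA => hsb.1 x y hA h
  have n1 : ¬ A v₁ v₂ := hns _ _ (hv₁.trans hv₂.symm)
  have n2 : ¬ A v₂ v₁ := hns _ _ (hv₂.trans hv₁.symm)
  have n3 : ¬ A v₁ v₁ := hns _ _ rfl
  have n4 : ¬ A v₂ v₂ := hns _ _ rfl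
  have n5 : ¬ A u u₁ := hns _ _ (hu.trans hu₁.symm)
  have n6 : ¬ A u₁ u := hns _ _ (hu₁.trans hu.symm)
  have n7 : ¬ A u u₂ := hns _ _ (hu.trans hu₂.symm)
  have n8 : ¬ A u₂ u := hns _ _ (hu₂.trans hu.symm)
  have n9 : ¬ A u u := hns _ _ rfl
  have n10 : ¬ A u₁ u₁ := hns _ _ rfl
  have n11 : ¬ A u₂ u₂ := hns _ _ rfl
  have d1 : v₁ ≠ v₂ := fun h => hn₂ (h ▸ ha₁)
  have d2 : u ≠ u₁ := fun h => hn₁ (h ▸ h1)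
  have d3 : u ≠ u₂ := fun h => hn₄ (h ▸ h2)
  have e1 : v₁ ≠ u := sideNe hv₁ hu
  have e2 : v₁ ≠ u₁ := sideNe hv₁ hu₁
  have e3 : v₁ ≠ u₂ := sideNe hv₁ hu₂
  have e4 : v₂ ≠ u := sideNe hv₂ hu
  have e5 : v₂ ≠ u₁ := sideNe hv₂ hu₁
  have e6 : v₂ ≠ u₂ := sideNe hv₂ hu₂
  by_cases c1 : A u v₂ <;> by_cases c2 : A v₂ u
  · -- both: C4'' copy on ![v₂, v₁, u, u₁]
    refine hforb (Or.inr (Or.inr (Or.inl ⟨![v₂, v₁, u, u₁], ?_, ?_⟩)))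
    · intro a b
      fin_cases a <;> fin_cases b <;> simp_all <;> (intro h; subst h; simp_all)
    · intro a b
      fin_cases a <;> fin_cases b <;> simp [C4PP, Prod.ext_iff] <;> assumption
  · -- A u v₂ only: C4' copy on ![v₁, v₂, u, u₂]
    refine hforb (Or.inl ⟨![v₁, v₂, u, u₂], ?_, ?_⟩)
    · intro a b
      fin_cases a <;> fin_cases b <;> simp_all <;> (intro h; subst h; simp_all)
    · intro a b
      fin_cases a <;> fin_cases b <;> simp [C4P, Prod.ext_iff] <;> assumption
  · -- A v₂ u only: flip C4' copy on ![v₁, v₂, u, u₁]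
    refine hforb (Or.inr (Or.inl ⟨![v₁, v₂, u, u₁], ?_, ?_⟩))
    · intro a b
      fin_cases a <;> fin_cases b <;> simp_all <;> (intro h; subst h; simp_all)
    · intro a b
      fin_cases a <;> fin_cases b <;> simp [C4P, flip, Prod.ext_iff] <;> assumption
  · exact (hsb.2 u v₂ (by simp [hu, hv₂])).elim c1 c2

lemma noHstar (hsb : SemicompleteBipartite σ A) (hforb : ¬ ContainsHFORB σ A)
    (v₁ v₂ u₁ u₂ : W)
    (hv₁ : σ v₁ = false) (hv₂ : σ v₂ = false) (hu₁ : σ u₁ = true) (hu₂ : σ u₂ = true)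
    (ha₁ : A v₁ u₁) (ha₂ : A u₁ v₂) (ha₃ : A v₂ u₂) (ha₄ : A u₂ v₁)
    (hn₁ : ¬ A u₁ v₁) (hn₂ : ¬ A v₂ u₁) (hn₃ : ¬ A u₂ v₂) (hn₄ : ¬ A v₁ u₂)
    (u : W) (hu : σ u = true) (h1 : A v₁ u) (h2 : A v₂ u)
    (h3 : ¬ A u v₁) (h4 : ¬ A u v₂) : False := by
  have hns : ∀ x y : W, σ x = σ y → ¬ A x y := fun x y h hA => hsb.1 x y hA h
  have n1 : ¬ A v₁ v₂ := hns _ _ (hv₁.trans hv₂.symm)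
  have n2 : ¬ A v₂ v₁ := hns _ _ (hv₂.trans hv₁.symm)
  have n3 : ¬ A v₁ v₁ := hns _ _ rfl
  have n4 : ¬ A v₂ v₂ := hns _ _ rfl
  have n5 : ¬ A u u₁ := hns _ _ (hu.trans hu₁.symm)
  have n6 : ¬ A u₁ u := hns _ _ (hu₁.trans hu.symm)
  have n7 : ¬ A u u₂ := hns _ _ (hu.trans hu₂.symm)
  have n8 : ¬ A u₂ u := hns _ _ (hu₂.trans hu.symm)
  have n9 : ¬ A u₁ u₂ := hns _ _ (hu₁.trans hu₂.symm)
  have n10 : ¬ A u₂ u₁ := hns _ _ (hu₂.trans hu₁.symm)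
  have n11 : ¬ A u u := hns _ _ rfl
  have n12 : ¬ A u₁ u₁ := hns _ _ rfl
  have n13 : ¬ A u₂ u₂ := hns _ _ rfl
  have d1 : v₁ ≠ v₂ := fun h => hn₂ (h ▸ ha₁)
  have d2 : u ≠ u₁ := fun h => hn₂ (h ▸ h2)
  have d3 : u ≠ u₂ := fun h => hn₄ (h ▸ h1)
  have d4 : u₁ ≠ u₂ := fun h => hn₃ (h ▸ ha₂)
  have e1 : v₁ ≠ u := sideNe hv₁ hu
  have e2 : v₁ ≠ u₁ := sideNe hv₁ hu₁
  have e3 : v₁ ≠ u₂ := sideNe hv₁ hu₂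
  have e4 : v₂ ≠ u := sideNe hv₂ hu
  have e5 : v₂ ≠ u₁ := sideNe hv₂ hu₁
  have e6 : v₂ ≠ u₂ := sideNe hv₂ hu₂
  refine hforb (Or.inr (Or.inr (Or.inr (Or.inr (Or.inl
    ⟨![v₁, v₂, u₁, u₂, u], ?_, ?_⟩)))))
  · intro a b
    fin_cases a <;> fin_cases b <;> simp_all <;> (intro h; subst h; simp_all)
  · intro a b
    fin_cases a <;> fin_cases b <;> simp [Hstar, Prod.ext_iff] <;> assumption

lemma noHstarFlip (hsb : SemicompleteBipartite σ A) (hforb : ¬ ContainsHFORB σ A)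
    (v₁ v₂ u₁ u₂ : W)
    (hv₁ : σ v₁ = false) (hv₂ : σ v₂ = false) (hu₁ : σ u₁ = true) (hu₂ : σ u₂ = true)
    (ha₁ : A v₁ u₁) (ha₂ : A u₁ v₂) (ha₃ : A v₂ u₂) (ha₄ : A u₂ v₁)
    (hn₁ : ¬ A u₁ v₁) (hn₂ : ¬ A v₂ u₁) (hn₃ : ¬ A u₂ v₂) (hn₄ : ¬ A v₁ u₂)
    (u : W) (hu : σ u = true) (h1 : A u v₁) (h2 : A u v₂)
    (h3 : ¬ A v₁ u) (h4 : ¬ A v₂ u) : False := by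
  have hns : ∀ x y : W, σ x = σ y → ¬ A x y := fun x y h hA => hsb.1 x y hA h
  have n1 : ¬ A v₁ v₂ := hns _ _ (hv₁.trans hv₂.symm)
  have n2 : ¬ A v₂ v₁ := hns _ _ (hv₂.trans hv₁.symm)
  have n3 : ¬ A v₁ v₁ := hns _ _ rfl
  have n4 : ¬ A v₂ v₂ := hns _ _ rfl
  have n5 : ¬ A u u₁ := hns _ _ (hu.trans hu₁.symm)
  have n6 : ¬ A u₁ u := hns _ _ (hu₁.trans hu.symm)
  have n7 : ¬ A u u₂ := hns _ _ (hu.trans hu₂.symm)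
  have n8 : ¬ A u₂ u := hns _ _ (hu₂.trans hu.symm)
  have n9 : ¬ A u₁ u₂ := hns _ _ (hu₁.trans hu₂.symm)
  have n10 : ¬ A u₂ u₁ := hns _ _ (hu₂.trans hu₁.symm)
  have n11 : ¬ A u u := hns _ _ rfl
  have n12 : ¬ A u₁ u₁ := hns _ _ rfl
  have n13 : ¬ A u₂ u₂ := hns _ _ rfl
  have d1 : v₁ ≠ v₂ := fun h => hn₂ (h ▸ ha₁)
  have d2 : u ≠ u₁ := fun h => hn₁ (h ▸ h1)
  have d3 : u ≠ u₂ := fun h => hn₃ (h ▸ h2)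
  have d4 : u₁ ≠ u₂ := fun h => hn₃ (h ▸ ha₂)
  have e1 : v₁ ≠ u := sideNe hv₁ hu
  have e2 : v₁ ≠ u₁ := sideNe hv₁ hu₁
  have e3 : v₁ ≠ u₂ := sideNe hv₁ hu₂
  have e4 : v₂ ≠ u := sideNe hv₂ hu
  have e5 : v₂ ≠ u₁ := sideNe hv₂ hu₁
  have e6 : v₂ ≠ u₂ := sideNe hv₂ hu₂
  refine hforb (Or.inr (Or.inr (Or.inr (Or.inr (Or.inr (Or.inl
    ⟨![v₁, v₂, u₂, u₁, u], ?_, ?_⟩))))))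
  · intro a b
    fin_cases a <;> fin_cases b <;> simp_all <;> (intro h; subst h; simp_all)
  · intro a b
    fin_cases a <;> fin_cases b <;> simp [Hstar, flip, Prod.ext_iff] <;> assumption

lemma plusEq (hsb : SemicompleteBipartite σ A) (hforb : ¬ ContainsHFORB σ A)
    (v₁ v₂ u₁ u₂ : W)
    (hv₁ : σ v₁ = false) (hv₂ : σ v₂ = false) (hu₁ : σ u₁ = true) (hu₂ : σ u₂ = true)
    (ha₁ : A v₁ u₁) (ha₂ : A u₁ v₂) (ha₃ : A v₂ u₂) (ha₄ : A u₂ v₁)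
    (hn₁ : ¬ A u₁ v₁) (hn₂ : ¬ A v₂ u₁) (hn₃ : ¬ A u₂ v₂) (hn₄ : ¬ A v₁ u₂) :
    {u : W | σ u = true ∧ A v₁ u ∧ ¬ A u v₁} = {u : W | σ u = true ∧ A u v₂ ∧ ¬ A v₂ u} := by
  have key1 := noM hsb hforb v₁ v₂ u₁ u₂ hv₁ hv₂ hu₁ hu₂ ha₁ ha₂ ha₃ ha₄ hn₁ hn₂ hn₃ hn₄
  have key2 := noM hsb hforb v₂ v₁ u₂ u₁ hv₂ hv₁ hu₂ hu₁ ha₃ ha₄ ha₁ ha₂ hn₃ hn₄ hn₁ hn₂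
  ext u
  simp only [Set.mem_setOf_eq]
  constructor
  · rintro ⟨hσ, hA, hN⟩
    have hc : A u v₂ := by
      by_contra hc
      have hb : A v₂ u := (hsb.2 u v₂ (by simp [hσ, hv₂])).resolve_left hc
      exact noHstar hsb hforb v₁ v₂ u₁ u₂ hv₁ hv₂ hu₁ hu₂ ha₁ ha₂ ha₃ ha₄
        hn₁ hn₂ hn₃ hn₄ u hσ hA hb hN hc
    exact ⟨hσ, hc, fun h => key2 u hσ hc h⟩
  · rintro ⟨hσ, hA, hN⟩
    have hc : A v₁ u := by
      by_contra hc
      have hb : A u v₁ := (hsb.2 v₁ u (by simp [hσ, hv₁])).resolve_left hc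
      exact noHstarFlip hsb hforb v₁ v₂ u₁ u₂ hv₁ hv₂ hu₁ hu₂ ha₁ ha₂ ha₃ ha₄
        hn₁ hn₂ hn₃ hn₄ u hσ hb hA hc hN
    exact ⟨hσ, hc, fun h => key1 u hσ h hc⟩

end Helpers

/-- From the proof of Theorem 3.4: if `v₁ u₁ v₂ u₂ v₁` is an induced directed 4-cycle of a
semicomplete bipartite digraph containing no induced subdigraph from HFORB, then
`M(v₁) = M(v₂) = ∅`, `M⁺(v₁) = M⁻(v₂)` and `M⁻(v₁) = M⁺(v₂)`. -/

theorem stmt18 {W : Type*} [Fintype W] (σ : W → Bool) (A : W → W → Prop)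
    (hsb : SemicompleteBipartite σ A)
    (hforb : ¬ ContainsHFORB σ A)
    (v₁ v₂ u₁ u₂ : W)
    (hv₁ : σ v₁ = false) (hv₂ : σ v₂ = false) (hu₁ : σ u₁ = true) (hu₂ : σ u₂ = true)
    (hvv : v₁ ≠ v₂) (huu : u₁ ≠ u₂)
    (ha₁ : A v₁ u₁) (ha₂ : A u₁ v₂) (ha₃ : A v₂ u₂) (ha₄ : A u₂ v₁)
    (hn₁ : ¬ A u₁ v₁) (hn₂ : ¬ A v₂ u₁) (hn₃ : ¬ A u₂ v₂) (hn₄ : ¬ A v₁ u₂) :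
    ({u : W | σ u = true ∧ A u v₁ ∧ A v₁ u} = ∅ ∧
     {u : W | σ u = true ∧ A u v₂ ∧ A v₂ u} = ∅) ∧
    {u : W | σ u = true ∧ A v₁ u ∧ ¬ A u v₁} = {u : W | σ u = true ∧ A u v₂ ∧ ¬ A v₂ u} ∧
    {u : W | σ u = true ∧ A u v₁ ∧ ¬ A v₁ u} = {u : W | σ u = true ∧ A v₂ u ∧ ¬ A u v₂} := by
  have key1 := noM hsb hforb v₁ v₂ u₁ u₂ hv₁ hv₂ hu₁ hu₂ ha₁ ha₂ ha₃ ha₄ hn₁ hn₂ hn₃ hn₄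
  have key2 := noM hsb hforb v₂ v₁ u₂ u₁ hv₂ hv₁ hu₂ hu₁ ha₃ ha₄ ha₁ ha₂ hn₃ hn₄ hn₁ hn₂
  refine ⟨⟨?_, ?_⟩, ?_, ?_⟩
  · rw [Set.eq_empty_iff_forall_notMem]
    rintro u ⟨hσ, h1, h2⟩
    exact key1 u hσ h1 h2
  · rw [Set.eq_empty_iff_forall_notMem]
    rintro u ⟨hσ, h1, h2⟩
    exact key2 u hσ h1 h2
  · exact plusEq hsb hforb v₁ v₂ u₁ u₂ hv₁ hv₂ hu₁ hu₂ ha₁ ha₂ ha₃ ha₄ hn₁ hn₂ hn₃ hn₄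
  · exact (plusEq hsb hforb v₂ v₁ u₂ u₁ hv₂ hv₁ hu₂ hu₁ ha₃ ha₄ ha₁ ha₂ hn₃ hn₄ hn₁ hn₂).symm

end SBD
end
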